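/- arXiv:1708.09328 — 2 statements merged into one kernel-verified Lean document; each statement's English description precedes it below -/
import Mathlib

section
/- For every integer d ≥ 1 and all real numbers p, q, s with 0 ≤ p ≤ q and s ≥ 0, one has Σ_{j=1}^d Σ_{r=1}^j C(d,j) C(j,r) (r/j) p^r (q−p)^{j−r} s^{d−j} = p · Σ_{j=1}^d C(d,j) q^{j−1} s^{d−j}; in particular, if q > 0 this common value equals p · ((q+s)^d − s^d)/q. Consequently, under power-of-d routing in a system whose empirical state measure is ν on N servers, the probability that an arriving job is routed to a server in state (n,z_1,…,z_n) equals (ν({(n,z_1,…,z_n)})/N) · (R_n^d − R_{n+1}^d)/(R_n − R_{n+1}), where R_n is the fraction of servers with at least n jobs in service. -/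
open scoped NNReal Classical

lemma pod_icc_range (d : ℕ) (f : ℕ → ℝ) : ∑ j ∈ Finset.Icc 1 d, f j = ∑ j ∈ Finset.range d, f (1 + j) := by
  rw [← Finset.Ico_add_one_right_eq_Icc, Finset.sum_Ico_eq_sum_range]; simp

lemma pod_inner_sum (j : ℕ) (hj : 1 ≤ j) (p q : ℝ) :
    ∑ r ∈ Finset.Icc 1 j, (j.choose r : ℝ) * ((r : ℝ) / (j : ℝ)) * p ^ r * (q - p) ^ (j - r)
      = p * q ^ (j - 1) := by
  rw [pod_icc_range]
  have hjR : (j : ℝ) ≠ 0 := by positivity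
  have key : ∀ r ∈ Finset.range j,
      (j.choose (1 + r) : ℝ) * (((1 + r : ℕ) : ℝ) / (j : ℝ)) * p ^ (1 + r) * (q - p) ^ (j - (1 + r))
        = p * ((j - 1).choose r * p ^ r * (q - p) ^ ((j - 1) - r)) := by
    intro r hr
    rw [show 1 + r = r + 1 from by omega]
    have hnat : j * (j - 1).choose r = j.choose (r + 1) * (r + 1) := by
      have := Nat.add_one_mul_choose_eq (j - 1) r
      rw [Nat.sub_add_cancel hj] at this
      exact this
    have hcast : (j : ℝ) * ((j - 1).choose r : ℝ) = (j.choose (r + 1) : ℝ) * ((r + 1 : ℕ) : ℝ) := by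
      exact_mod_cast congrArg (Nat.cast : ℕ → ℝ) hnat
    have hch : ((j - 1).choose r : ℝ) = (j.choose (r + 1) : ℝ) * ((r + 1 : ℕ) : ℝ) / (j : ℝ) := by
      field_simp; push_cast at hcast ⊢; linarith
    have hsub : j - (r + 1) = (j - 1) - r := by omega
    rw [hsub, pow_succ, hch]
    field_simp
  rw [Finset.sum_congr rfl key, ← Finset.mul_sum]
  congr 1
  have h := add_pow p (q - p) (j - 1)
  have hq : p + (q - p) = q := by ring
  rw [hq] at h
  rw [h]
  have hr : Finset.range j = Finset.range ((j-1)+1) := by congr 1; omega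
  rw [hr]
  apply Finset.sum_congr rfl
  intro m _; ring

lemma pod_part2aux (d : ℕ) (q s : ℝ) (hq : q ≠ 0) :
    q * ∑ j ∈ Finset.Icc 1 d, (d.choose j : ℝ) * q ^ (j - 1) * s ^ (d - j)
      = (q + s) ^ d - s ^ d := by
  rw [Finset.mul_sum, pod_icc_range d (fun j => q * ((d.choose j : ℝ) * q ^ (j - 1) * s ^ (d - j)))]
  rw [add_pow q s d, Finset.sum_range_succ' (fun m => q ^ m * s ^ (d - m) * (d.choose m : ℝ)) d]
  simp only [pow_zero, Nat.choose_zero_right, Nat.cast_one, Nat.sub_zero, one_mul, mul_one]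
  rw [add_sub_cancel_right]
  apply Finset.sum_congr rfl
  intro k _
  rw [show 1 + k = k + 1 from by omega, Nat.add_sub_cancel, pow_succ]
  ring

open Finset in
lemma pod_recomb (m : ℕ) (e b : ℝ) (φ : ℕ → ℝ) :
    e * (∑ j ∈ range (m+1), (m.choose j : ℝ) * e^j * b^(m-j) * φ (j+1))
      + b * (∑ j ∈ range (m+1), (m.choose j : ℝ) * e^j * b^(m-j) * φ j)
    = ∑ j ∈ range (m+2), ((m+1).choose j : ℝ) * e^j * b^(m+1-j) * φ j := by
  rw [Finset.sum_range_succ' (fun j => ((m+1).choose j : ℝ) * e^j * b^(m+1-j) * φ j) (m+1)]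
  have h1 : ∀ j ∈ range (m+1),
      (((m+1).choose (j+1) : ℝ)) * e^(j+1) * b^(m+1-(j+1)) * φ (j+1)
        = e * ((m.choose j : ℝ) * e^j * b^(m-j) * φ (j+1))
          + (m.choose (j+1) : ℝ) * e^(j+1) * b^(m-j) * φ (j+1) := by
    intro j hj
    have : (m+1).choose (j+1) = m.choose j + m.choose (j+1) := Nat.choose_succ_succ m j
    rw [this, show m+1-(j+1) = m-j from by omega]
    push_cast
    rw [pow_succ]
    ring
  rw [Finset.sum_congr rfl h1, Finset.sum_add_distrib, ← Finset.mul_sum]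
  have h2 : b * (∑ j ∈ range (m+1), (m.choose j : ℝ) * e^j * b^(m-j) * φ j)
      = ∑ j ∈ range (m+1), (m.choose (j+1) : ℝ) * e^(j+1) * b^(m-j) * φ (j+1)
        + ((m+1).choose 0 : ℝ) * e^0 * b^(m+1-0) * φ 0 := by
    rw [Finset.mul_sum,
      Finset.sum_range_succ' (fun j => b * ((m.choose j : ℝ) * e^j * b^(m-j) * φ j)) m,
      Finset.sum_range_succ (fun j => (m.choose (j+1) : ℝ) * e^(j+1) * b^(m-j) * φ (j+1)) m]
    simp only [Nat.choose_succ_self, Nat.cast_zero, zero_mul, add_zero, Nat.choose_zero_right,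
      Nat.cast_one, pow_zero, one_mul, Nat.sub_zero, Nat.sub_self]
    congr 1
    · apply Finset.sum_congr rfl
      intro j hj
      rw [Finset.mem_range] at hj
      rw [show m - j = (m - (j+1)) + 1 from by omega]
      rw [pow_succ]
      ring
    · rw [pow_succ]; ring
  rw [h2]
  ring

open Finset in
lemma pod_count {α : Type*} [Fintype α] (pE pB : α → Prop)
    (hdisj : ∀ a, ¬ (pE a ∧ pB a)) (m : ℕ) :
    ∀ φ : ℕ → ℝ,
    (∑ g : Fin m → α, if ∀ i, pE (g i) ∨ pB (g i)
        then φ ((univ.filter fun i => pE (g i)).card) else 0)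
      = ∑ j ∈ Finset.range (m+1), (m.choose j : ℝ) *
          ((univ.filter pE).card : ℝ) ^ j * ((univ.filter pB).card : ℝ) ^ (m - j) * φ j := by
  induction m with
  | zero => intro φ; simp
  | succ m ih =>
    intro φ
    rw [← Equiv.sum_comp (Fin.consEquiv (fun _ : Fin (m+1) => α))
      (fun g : Fin (m+1) → α => if ∀ i, pE (g i) ∨ pB (g i)
        then φ ((univ.filter fun i => pE (g i)).card) else 0), Fintype.sum_prod_type]
    have hcard : ∀ (a : α) (g : Fin m → α),
        (univ.filter fun i : Fin (m+1) => pE ((Fin.cons a g : Fin (m+1) → α) i)).card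
          = (if pE a then 1 else 0) + (univ.filter fun i => pE (g i)).card := by
      intro a g
      rw [Finset.card_filter, Finset.card_filter, Fin.sum_univ_succ]
      simp
    have hterm : ∀ (a : α) (g : Fin m → α),
        (if ∀ i, pE ((Fin.cons a g : Fin (m+1) → α) i) ∨ pB ((Fin.cons a g : Fin (m+1) → α) i)
          then φ ((univ.filter fun i : Fin (m+1) => pE ((Fin.cons a g : Fin (m+1) → α) i)).card) else 0)
        = (if pE a then (if ∀ i, pE (g i) ∨ pB (g i)
              then φ ((univ.filter fun i => pE (g i)).card + 1) else 0)
           else if pB a then (if ∀ i, pE (g i) ∨ pB (g i)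
              then φ ((univ.filter fun i => pE (g i)).card) else 0)
           else 0) := by
      intro a g
      rw [hcard a g]
      simp only [Fin.forall_fin_succ, Fin.cons_zero, Fin.cons_succ]
      by_cases hE : pE a
      · simp [hE, Nat.add_comm]
      · by_cases hB : pB a
        · simp [hE, hB]
        · simp [hE, hB]
    have hsplit : ∀ (X Y : ℝ),
        (∑ a : α, if pE a then X else if pB a then Y else 0)
          = ((univ.filter pE).card : ℝ) * X + ((univ.filter pB).card : ℝ) * Y := by
      intro X Y
      have : ∀ a : α, (if pE a then X else if pB a then Y else 0)
          = (if pE a then X else 0) + (if pB a then Y else 0) := by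
        intro a
        by_cases hE : pE a
        · have : ¬ pB a := fun hB => hdisj a ⟨hE, hB⟩
          simp [hE, this]
        · simp [hE]
      rw [Finset.sum_congr rfl (fun a _ => this a), Finset.sum_add_distrib,
        ← Finset.sum_filter, ← Finset.sum_filter, Finset.sum_const, Finset.sum_const,
        nsmul_eq_mul, nsmul_eq_mul]
    calc ∑ a : α, ∑ g : Fin m → α,
          (if ∀ i, pE ((Fin.cons a g : Fin (m+1) → α) i) ∨ pB ((Fin.cons a g : Fin (m+1) → α) i)
            then φ ((univ.filter fun i : Fin (m+1) => pE ((Fin.cons a g : Fin (m+1) → α) i)).card) else 0)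
        = ∑ a : α, (if pE a then (∑ g : Fin m → α, if ∀ i, pE (g i) ∨ pB (g i)
              then φ ((univ.filter fun i => pE (g i)).card + 1) else 0)
           else if pB a then (∑ g : Fin m → α, if ∀ i, pE (g i) ∨ pB (g i)
              then φ ((univ.filter fun i => pE (g i)).card) else 0)
           else 0) := by
          apply Finset.sum_congr rfl
          intro a _
          rw [Finset.sum_congr rfl (fun g _ => hterm a g)]
          by_cases hE : pE a
          · simp [hE]
          · by_cases hB : pB a <;> simp [hE, hB]
      _ = ((univ.filter pE).card : ℝ) *
            (∑ j ∈ Finset.range (m+1), (m.choose j : ℝ) *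
              ((univ.filter pE).card : ℝ) ^ j * ((univ.filter pB).card : ℝ) ^ (m - j) * φ (j+1))
          + ((univ.filter pB).card : ℝ) *
            (∑ j ∈ Finset.range (m+1), (m.choose j : ℝ) *
              ((univ.filter pE).card : ℝ) ^ j * ((univ.filter pB).card : ℝ) ^ (m - j) * φ j) := by
          rw [hsplit, ih (fun j => φ (j+1)), ih φ]
      _ = _ := by
          rw [pod_recomb]

open Finset in
lemma pod_cons_card {α : Type*} [Fintype α] {m : ℕ} (P : α → Prop) (a : α) (g : Fin m → α) :
    (univ.filter fun i : Fin (m+1) => P ((Fin.cons a g : Fin (m+1) → α) i)).card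
      = (if P a then 1 else 0) + (univ.filter fun i => P (g i)).card := by
  rw [Finset.card_filter, Finset.card_filter, Fin.sum_univ_succ]
  simp

lemma pod_card_inst {α : Type*} (p : α → Prop) (h1 h2 : DecidablePred p) (s : Finset α) :
    (@Finset.filter α p h1 s).card = (@Finset.filter α p h2 s).card := by
  have : h1 = h2 := funext fun a => Subsingleton.elim _ _
  rw [this]

noncomputable def podT {α : Type*} [Fintype α] (pZ pE pB : α → Prop) {d : ℕ}
    (f : Fin d → α) (i : Fin d) : ℝ :=
  if ∀ k, pE (f k) ∨ pB (f k) then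
    (if pZ (f i) then (1:ℝ) else 0) / ((Finset.univ.filter fun k => pE (f k)).card : ℝ)
  else 0

open Finset in
lemma pod_sym {α : Type*} [Fintype α] (pZ pE pB : α → Prop) {m : ℕ} (i : Fin (m+1)) :
    (∑ f : Fin (m+1) → α, podT pZ pE pB f i) = ∑ f : Fin (m+1) → α, podT pZ pE pB f 0 := by
  set σ : Equiv.Perm (Fin (m+1)) := Equiv.swap 0 i with hσ
  set e : (Fin (m+1) → α) ≃ (Fin (m+1) → α) := Equiv.arrowCongr σ (Equiv.refl α) with he
  rw [← Equiv.sum_comp e (fun f => podT pZ pE pB f 0)]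
  apply Finset.sum_congr rfl
  intro f _
  have hef : ∀ j, e f j = f (σ j) := by
    intro j
    simp [he, Equiv.arrowCongr_apply, hσ, Equiv.symm_swap, Function.comp]
  have hcond : (∀ k, pE (e f k) ∨ pB (e f k)) ↔ (∀ k, pE (f k) ∨ pB (f k)) := by
    constructor
    · intro h k
      have := h (σ.symm k)
      rwa [hef, Equiv.apply_symm_apply] at this
    · intro h k
      rw [hef]; exact h _
  have hcard : (univ.filter fun k => pE (e f k)).card = (univ.filter fun k => pE (f k)).card := by
    rw [Finset.card_filter, Finset.card_filter]
    calc (∑ k : Fin (m+1), if pE (e f k) then 1 else 0)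
        = ∑ k : Fin (m+1), (if pE (f (σ k)) then 1 else 0) := by
          apply Finset.sum_congr rfl; intro k _; rw [hef]
      _ = _ := Equiv.sum_comp σ (fun k => if pE (f k) then 1 else 0)
  have h0 : e f 0 = f i := by rw [hef]; simp [hσ]
  unfold podT
  rw [if_congr hcond rfl rfl, h0, hcard]

open Finset in
lemma pod_main {α : Type*} [Fintype α] (pZ pE pB : α → Prop)
    (hZE : ∀ a, pZ a → pE a) (hdisj : ∀ a, ¬ (pE a ∧ pB a))
    (d : ℕ) (hd : 1 ≤ d) :
    (∑ f : Fin d → α, if ∀ i, pE (f i) ∨ pB (f i) then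
        ((univ.filter fun i => pZ (f i)).card : ℝ) / ((univ.filter fun i => pE (f i)).card : ℝ)
      else 0)
    = ((univ.filter pZ).card : ℝ) *
        ∑ j ∈ Finset.Icc 1 d, (d.choose j : ℝ) * ((univ.filter pE).card : ℝ) ^ (j-1) *
          ((univ.filter pB).card : ℝ) ^ (d - j) := by
  obtain ⟨m, rfl⟩ : ∃ m, d = m + 1 := ⟨d - 1, by omega⟩
  -- Step A: numerator as a sum, swap sums
  have stepA : (∑ f : Fin (m+1) → α, if ∀ i, pE (f i) ∨ pB (f i) then
        ((univ.filter fun i => pZ (f i)).card : ℝ) / ((univ.filter fun i => pE (f i)).card : ℝ)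
      else 0)
      = ∑ i : Fin (m+1), ∑ f : Fin (m+1) → α, podT pZ pE pB f i := by
    rw [← Finset.sum_comm]
    apply Finset.sum_congr rfl
    intro f _
    unfold podT
    by_cases h : ∀ k, pE (f k) ∨ pB (f k)
    · simp only [if_pos h]
      rw [← Finset.sum_div]
      congr 1
      rw [Finset.card_filter, Nat.cast_sum]
      apply Finset.sum_congr rfl
      intro i _
      split <;> simp
    · simp [h]
  rw [stepA]
  have stepB : ∀ i : Fin (m+1), (∑ f : Fin (m+1) → α, podT pZ pE pB f i)
      = ∑ f : Fin (m+1) → α, podT pZ pE pB f 0 := fun i => pod_sym pZ pE pB i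
  rw [Finset.sum_congr rfl (fun i _ => stepB i), Finset.sum_const, Finset.card_univ,
    Fintype.card_fin, nsmul_eq_mul]
  -- Step C : decompose at coordinate 0
  have stepC : (∑ f : Fin (m+1) → α, podT pZ pE pB f 0)
      = ((univ.filter pZ).card : ℝ) *
          ∑ g : Fin m → α, (if ∀ i, pE (g i) ∨ pB (g i)
            then (fun j : ℕ => 1 / ((j : ℝ) + 1)) ((univ.filter fun i => pE (g i)).card) else 0) := by
    rw [← Equiv.sum_comp (Fin.consEquiv (fun _ : Fin (m+1) => α))
      (fun f : Fin (m+1) → α => podT pZ pE pB f 0), Fintype.sum_prod_type]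
    have hterm : ∀ (a : α) (g : Fin m → α),
        podT pZ pE pB (Fin.cons a g : Fin (m+1) → α) 0
          = if pZ a then (if ∀ i, pE (g i) ∨ pB (g i)
              then 1 / (((univ.filter fun i => pE (g i)).card : ℝ) + 1) else 0) else 0 := by
      intro a g
      unfold podT
      simp only [Fin.cons_zero]
      by_cases hZ : pZ a
      · have hE : pE a := hZE a hZ
        simp only [if_pos hZ, pod_cons_card pE a g, if_pos hE]
        have hcond : (∀ k : Fin (m+1), pE ((Fin.cons a g : Fin (m+1) → α) k)
              ∨ pB ((Fin.cons a g : Fin (m+1) → α) k))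
            ↔ (∀ i, pE (g i) ∨ pB (g i)) := by
          simp only [Fin.forall_fin_succ, Fin.cons_zero, Fin.cons_succ]
          simp [hE]
        rw [if_congr hcond rfl rfl]
        by_cases hc : ∀ i, pE (g i) ∨ pB (g i)
        · rw [if_pos hc, if_pos hc]
          push_cast
          ring
        · rw [if_neg hc, if_neg hc]
      · simp [hZ]
    calc (∑ a : α, ∑ g : Fin m → α, podT pZ pE pB (Fin.cons a g : Fin (m+1) → α) 0)
        = ∑ a : α, (if pZ a then (∑ g : Fin m → α, if ∀ i, pE (g i) ∨ pB (g i)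
              then 1 / (((univ.filter fun i => pE (g i)).card : ℝ) + 1) else 0) else 0) := by
          apply Finset.sum_congr rfl
          intro a _
          rw [Finset.sum_congr rfl (fun g _ => hterm a g)]
          by_cases hZ : pZ a <;> simp [hZ]
      _ = _ := by
          rw [← Finset.sum_filter, Finset.sum_const, nsmul_eq_mul]
  rw [stepC, pod_count pE pB hdisj m (fun j : ℕ => 1 / ((j : ℝ) + 1)),
    pod_icc_range (m+1) (fun j => ((m+1).choose j : ℝ) * ((univ.filter pE).card : ℝ) ^ (j-1) *
      ((univ.filter pB).card : ℝ) ^ ((m+1) - j)), mul_left_comm]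
  congr 1
  rw [Finset.mul_sum]
  apply Finset.sum_congr rfl
  intro j hj
  rw [show (1+j) - 1 = j from by omega, show (m+1) - (1+j) = m - j from by omega,
    show 1 + j = j + 1 from by omega]
  have hnat : (m+1) * m.choose j = (m+1).choose (j+1) * (j+1) := Nat.add_one_mul_choose_eq m j
  have hcast : ((m:ℝ)+1) * (m.choose j : ℝ) = ((m+1).choose (j+1) : ℝ) * ((j:ℝ)+1) := by
    exact_mod_cast congrArg (Nat.cast : ℕ → ℝ) hnat
  have hj1 : ((j:ℝ)+1) ≠ 0 := by positivity
  field_simp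
  push_cast
  linear_combination hcast * (((univ.filter pE).card : ℝ) ^ j * ((univ.filter pB).card : ℝ) ^ (m - j))

noncomputable section

/-- The server-state space: an occupancy `n : ℕ` together with the ages of the `n` jobs. -/
abbrev SState : Type := Σ n : ℕ, (Fin n → ℝ≥0)

/-- The probability that an arriving job is routed to a server in the tagged state `z`
under power-of-`d` routing, given the configuration `servers : Fin N → SState`:
`d` servers are sampled independently and uniformly at random, and the job is sent to a
sampled server of minimum occupancy, ties among minimal-occupancy sampled slots being
broken uniformly at random.  (A sampled slot can be the destination only if every sampled
slot has occupancy `≥ z.1`; the destination is then uniform among the sampled slots of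
minimal occupancy, i.e. occupancy `z.1` if any slot attains it.) -/
def routingProb (N d : ℕ) (servers : Fin N → SState) (z : SState) : ℝ :=
  (∑ f : Fin d → Fin N,
      if ∀ i, z.1 ≤ (servers (f i)).1 then
        (((Finset.univ.filter fun i : Fin d => servers (f i) = z).card : ℝ) /
          ((Finset.univ.filter fun i : Fin d => (servers (f i)).1 = z.1).card : ℝ))
      else 0) / (N : ℝ) ^ d

/-- The fraction of servers with at least `m` jobs in service. -/
def Rfrac (N : ℕ) (servers : Fin N → SState) (m : ℕ) : ℝ :=
  ((Finset.univ.filter fun i : Fin N => m ≤ (servers i).1).card : ℝ) / (N : ℝ)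

/-- **The power-of-`d` routing probability.**
(1) For every `d ≥ 1` and `0 ≤ p ≤ q`, `s ≥ 0`,
`Σ_{j=1}^d Σ_{r=1}^j C(d,j) C(j,r) (r/j) p^r (q−p)^{j−r} s^{d−j}
  = p Σ_{j=1}^d C(d,j) q^{j−1} s^{d−j}`;
(2) if moreover `q > 0` this common value equals `p ((q+s)^d − s^d)/q`;
(3) consequently, under power-of-`d` routing in a system of `N` servers whose empirical
state is the configuration `servers`, the probability that an arriving job is routed to
a server in state `z = (n, z₁, …, z_n)` equals
`(#{i : servers i = z}/N) · (R_n^d − R_{n+1}^d)/(R_n − R_{n+1})`,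
where `R_m` is the fraction of servers with at least `m` jobs in service. -/
theorem power_of_d_routing_probability :
    (∀ d : ℕ, 1 ≤ d → ∀ p q s : ℝ, 0 ≤ p → p ≤ q → 0 ≤ s →
      (∑ j ∈ Finset.Icc 1 d, ∑ r ∈ Finset.Icc 1 j,
          (d.choose j : ℝ) * (j.choose r : ℝ) * ((r : ℝ) / (j : ℝ)) *
            p ^ r * (q - p) ^ (j - r) * s ^ (d - j))
        = p * ∑ j ∈ Finset.Icc 1 d, (d.choose j : ℝ) * q ^ (j - 1) * s ^ (d - j)) ∧
    (∀ d : ℕ, 1 ≤ d → ∀ p q s : ℝ, 0 ≤ p → p ≤ q → 0 ≤ s → 0 < q →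
      p * (∑ j ∈ Finset.Icc 1 d, (d.choose j : ℝ) * q ^ (j - 1) * s ^ (d - j))
        = p * ((q + s) ^ d - s ^ d) / q) ∧
    (∀ (N d : ℕ), 1 ≤ N → 1 ≤ d → ∀ (servers : Fin N → SState) (z : SState) (n : ℕ),
      z.1 = n →
      routingProb N d servers z
        = (((Finset.univ.filter fun i : Fin N => servers i = z).card : ℝ) / (N : ℝ)) *
            ((Rfrac N servers n) ^ d - (Rfrac N servers (n + 1)) ^ d) /
            ((Rfrac N servers n) - (Rfrac N servers (n + 1)))) := by
  refine ⟨?_, ?_, ?_⟩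
  · intro d hd p q s hp hpq hs
    rw [Finset.mul_sum]
    apply Finset.sum_congr rfl
    intro j hj
    rw [Finset.mem_Icc] at hj
    calc ∑ r ∈ Finset.Icc 1 j, (d.choose j : ℝ) * (j.choose r : ℝ) * ((r : ℝ) / (j : ℝ)) *
            p ^ r * (q - p) ^ (j - r) * s ^ (d - j)
        = ((d.choose j : ℝ) * s ^ (d - j)) *
            ∑ r ∈ Finset.Icc 1 j, (j.choose r : ℝ) * ((r : ℝ) / (j : ℝ)) * p ^ r * (q - p) ^ (j - r) := by
          rw [Finset.mul_sum]
          apply Finset.sum_congr rfl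
          intro r _
          ring
      _ = ((d.choose j : ℝ) * s ^ (d - j)) * (p * q ^ (j - 1)) := by
          rw [pod_inner_sum j hj.1 p q]
      _ = p * ((d.choose j : ℝ) * q ^ (j - 1) * s ^ (d - j)) := by ring
  · intro d hd p q s hp hpq hs hq
    rw [← pod_part2aux d q s hq.ne']
    field_simp
  · intro N d hN hd servers z n hz
    subst hz
    have hZE : ∀ i : Fin N, (fun i : Fin N => servers i = z) i →
        (fun i : Fin N => (servers i).1 = z.1) i := by
      intro i h; exact congrArg Sigma.fst h
    have hdisj : ∀ i : Fin N, ¬ ((fun i : Fin N => (servers i).1 = z.1) i ∧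
        (fun i : Fin N => z.1 + 1 ≤ (servers i).1) i) := by
      intro i ⟨h1, h2⟩; omega
    have hmain := pod_main (fun i : Fin N => servers i = z)
      (fun i : Fin N => (servers i).1 = z.1) (fun i : Fin N => z.1 + 1 ≤ (servers i).1)
      hZE hdisj d hd
    beta_reduce at hmain
    have hcond : ∀ f : Fin d → Fin N,
        (∀ i, z.1 ≤ (servers (f i)).1) ↔
          (∀ i, (servers (f i)).1 = z.1 ∨ z.1 + 1 ≤ (servers (f i)).1) := by
      intro f
      constructor
      · intro h i; have := h i; omega
      · intro h i; have := h i; omega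
    have hsum : (∑ f : Fin d → Fin N,
        if ∀ i, z.1 ≤ (servers (f i)).1 then
          (((Finset.univ.filter fun i : Fin d => servers (f i) = z).card : ℝ) /
            ((Finset.univ.filter fun i : Fin d => (servers (f i)).1 = z.1).card : ℝ))
        else 0)
        = ∑ f : Fin d → Fin N,
          if ∀ i, (servers (f i)).1 = z.1 ∨ z.1 + 1 ≤ (servers (f i)).1 then
            (((Finset.univ.filter fun i : Fin d => servers (f i) = z).card : ℝ) /
              ((Finset.univ.filter fun i : Fin d => (servers (f i)).1 = z.1).card : ℝ))
          else 0 :=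
      Finset.sum_congr rfl fun f _ => if_congr (hcond f) rfl rfl
    have htot : (∑ f : Fin d → Fin N,
        if ∀ i, z.1 ≤ (servers (f i)).1 then
          (((Finset.univ.filter fun i : Fin d => servers (f i) = z).card : ℝ) /
            ((Finset.univ.filter fun i : Fin d => (servers (f i)).1 = z.1).card : ℝ))
        else 0)
        = ((Finset.univ.filter fun i : Fin N => servers i = z).card : ℝ) *
            ∑ j ∈ Finset.Icc 1 d, (d.choose j : ℝ) *
              ((Finset.univ.filter fun i : Fin N => (servers i).1 = z.1).card : ℝ) ^ (j-1) *
              ((Finset.univ.filter fun i : Fin N => z.1 + 1 ≤ (servers i).1).card : ℝ) ^ (d - j) := by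
      rw [hsum]
      convert hmain using 2 with f
      · congr!
      · exact congrArg _ (pod_card_inst _ _ _ _)
      · apply Finset.sum_congr rfl
        intro j _
        congr!
    rw [routingProb, htot]
    -- cardinality splitting
    have hab : (Finset.univ.filter fun i : Fin N => z.1 ≤ (servers i).1).card
        = (Finset.univ.filter fun i : Fin N => (servers i).1 = z.1).card
          + (Finset.univ.filter fun i : Fin N => z.1 + 1 ≤ (servers i).1).card := by
      rw [← Finset.card_union_of_disjoint]
      · congr 1
        rw [← Finset.filter_or]
        apply Finset.filter_congr
        intro i _
        constructor
        · intro h; omega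
        · intro h; omega
      · rw [Finset.disjoint_left]
        intro i hi1 hi2
        rw [Finset.mem_filter] at hi1 hi2
        omega
    have hzc_le : (Finset.univ.filter fun i : Fin N => servers i = z).card
        ≤ (Finset.univ.filter fun i : Fin N => (servers i).1 = z.1).card := by
      apply Finset.card_le_card
      intro i hi
      rw [Finset.mem_filter] at hi ⊢
      exact ⟨hi.1, by rw [hi.2]⟩
    rw [Rfrac, Rfrac, hab]
    by_cases hE0 : (Finset.univ.filter fun i : Fin N => (servers i).1 = z.1).card = 0
    · have hzc : (Finset.univ.filter fun i : Fin N => servers i = z).card = 0 := by omega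
      rw [hzc]
      simp
    · have hNR : ((N : ℝ)) ≠ 0 := by positivity
      have heR : ((Finset.univ.filter fun i : Fin N => (servers i).1 = z.1).card : ℝ) ≠ 0 :=
        Nat.cast_ne_zero.mpr hE0
      have hsum2 := pod_part2aux d
        ((Finset.univ.filter fun i : Fin N => (servers i).1 = z.1).card : ℝ)
        ((Finset.univ.filter fun i : Fin N => z.1 + 1 ≤ (servers i).1).card : ℝ) heR
      push_cast
      set e := ((Finset.univ.filter fun i : Fin N => (servers i).1 = z.1).card : ℝ)
      set b := ((Finset.univ.filter fun i : Fin N => z.1 + 1 ≤ (servers i).1).card : ℝ)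
      set zc := ((Finset.univ.filter fun i : Fin N => servers i = z).card : ℝ)
      set S := ∑ j ∈ Finset.Icc 1 d, (d.choose j : ℝ) * e ^ (j - 1) * b ^ (d - j)
      have hden : (e + b) / (N : ℝ) - b / (N : ℝ) = e / (N : ℝ) := by ring
      rw [hden, div_pow, div_pow]
      rw [div_sub_div _ _ (by positivity : ((N:ℝ))^d ≠ 0) (by positivity : ((N:ℝ))^d ≠ 0)]
      field_simp
      linear_combination zc * hsum2

end
end

section
/- If (ν_t^1)_{t≥0} and (ν_t^2)_{t≥0} are two weakly continuous maps into M_1(𝒰) each satisfying the mild-form mean-field equation, then for every t ≥ 0: ‖ν_t^1 − ν_t^2‖ ≤ ‖ν_0^1 − ν_0^2‖ + (2C‖β‖_∞ + 8d²λ) ∫_0^t ‖ν_s^1 − ν_s^2‖ ds. -/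
open MeasureTheory Filter Set
open scoped NNReal

noncomputable section

namespace MFModel

/-- The set `𝒰_n` of states with occupancy exactly `n`. -/
def level (n : ℕ) : Set SState := {u | u.1 = n}

/-- The empty state `0 ∈ 𝒰_0`. -/
def emptyState : SState := ⟨0, fun i => i.elim0⟩

/-- The state `(1,0)`: a single job of age `0`. -/
def oneZero : SState := ⟨1, fun _ => 0⟩

/-- `ν` is a probability measure concentrated on `𝒰 = ⋃_{n ≤ C} 𝒰_n`. -/
def MemM1 (C : ℕ) (ν : Measure SState) : Prop :=
  IsProbabilityMeasure ν ∧ ν {u : SState | u.1 ≤ C} = 1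

/-- `R̄_n(ν) = Σ_{m=n}^C ν(𝒰_m)` (so that `R̄_{C+1}(ν) = 0`). -/
def Rbar (C : ℕ) (ν : Measure SState) (n : ℕ) : ℝ :=
  ∑ m ∈ Finset.Icc n C, (ν (level m)).toReal

/-- `Φ_n(ν) = Σ_{k=0}^{d-1} R̄_n(ν)^k R̄_{n+1}(ν)^{d-1-k}`, the divided power difference
`(R̄_n^d − R̄_{n+1}^d)/(R̄_n − R̄_{n+1})`. -/
def Phi (C d : ℕ) (ν : Measure SState) (n : ℕ) : ℝ :=
  ∑ k ∈ Finset.range d, (Rbar C ν n) ^ k * (Rbar C ν (n + 1)) ^ (d - 1 - k)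

/-- The restriction of `ν` to the level `𝒰_n`, viewed as a measure on the ages. -/
def fiber (ν : Measure SState) (n : ℕ) : Measure (Fin n → ℝ≥0) :=
  Measure.comap (fun x : Fin n → ℝ≥0 => (⟨n, x⟩ : SState)) ν

/-- The restriction of `ν` to the level `𝒰_n`, as a measure on `[0,∞)^n ⊆ ℝ^n`. -/
def fiberReal (ν : Measure SState) (n : ℕ) : Measure (Fin n → ℝ) :=
  Measure.map (fun (x : Fin n → ℝ≥0) (i : Fin n) => (x i : ℝ)) (fiber ν n)

/-- The pairing `⟨ν, φ⟩ = ∫_𝒰 φ dν`. -/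
def pair (ν : Measure SState) (φ : SState → ℝ) : ℝ := ∫ u, φ u ∂ν

/-- The age shift `τ_y^+` on states (`y` a real number, truncated at `0`). -/
def shift (y : ℝ) (u : SState) : SState := ⟨u.1, fun i => u.2 i + Real.toNNReal y⟩

/-- `φ ∈ C_b(𝒰)`: bounded continuous. -/
def IsCb (φ : SState → ℝ) : Prop := Continuous φ ∧ ∃ M, ∀ u, |φ u| ≤ M

/-- `φ ∈ C_b^1(𝒰)` with partial-derivative family `D`: `φ` is bounded continuous, and on
each level the partial derivatives (one-sided at the boundary of `[0,∞)`) exist, are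
continuous and are bounded; `D n i x` is `∂φ(n,x)/∂x_i`. -/
def IsCb1 (φ : SState → ℝ) (D : (n : ℕ) → Fin n → (Fin n → ℝ≥0) → ℝ) : Prop :=
  IsCb φ ∧
  (∀ n (i : Fin n), Continuous (D n i)) ∧
  (∃ M, ∀ n (i : Fin n) x, |D n i x| ≤ M) ∧
  (∀ n (i : Fin n) (x : Fin n → ℝ≥0),
    HasDerivWithinAt (fun y : ℝ => φ ⟨n, Function.update x i (Real.toNNReal y)⟩)
      (D n i x) (Set.Ici (0 : ℝ)) ((x i : ℝ)))

/-- `φ' = Σ_i ∂φ/∂x_i`, built from the partial-derivative family `D`. -/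
def sumDeriv (D : (n : ℕ) → Fin n → (Fin n → ℝ≥0) → ℝ) (u : SState) : ℝ :=
  ∑ i : Fin u.1, D u.1 i u.2

/-- The drift functional `B[φ](ν)` of the mean-field model. -/
def drift (C d : ℕ) (lam : ℝ) (β : ℝ≥0 → ℝ) (φ : SState → ℝ) (ν : Measure SState) : ℝ :=
  (∑ n ∈ Finset.range C, ∑ j : Fin (n + 1),
    ∫ x : Fin (n + 1) → ℝ≥0,
      β (x j) * (φ ⟨n, x ∘ j.succAbove⟩ - φ ⟨n + 1, x⟩) ∂(fiber ν (n + 1)))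
  + lam * ((ν (level 0)).toReal * Phi C d ν 0 * (φ oneZero - φ emptyState)
      + ∑ n ∈ Finset.Icc 1 (C - 1), (Phi C d ν n / (n + 1)) *
          ∑ j : Fin (n + 1),
            ∫ x : Fin n → ℝ≥0, (φ ⟨n + 1, j.insertNth 0 x⟩ - φ ⟨n, x⟩) ∂(fiber ν n))

/-- Weak continuity of a path of measures on `[0,∞)`. -/
def WeaklyContinuous (ν : ℝ → Measure SState) : Prop :=
  ∀ f : BoundedContinuousFunction SState ℝ,
    ContinuousOn (fun t => ∫ u, f u ∂(ν t)) (Set.Ici (0 : ℝ))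

/-- The weak-form mean-field equation for the test function `φ` with derivative family `D`. -/
def WeakEq (C d : ℕ) (lam : ℝ) (β : ℝ≥0 → ℝ) (ν : ℝ → Measure SState)
    (φ : SState → ℝ) (D : (n : ℕ) → Fin n → (Fin n → ℝ≥0) → ℝ) : Prop :=
  ∀ t ≥ (0 : ℝ),
    pair (ν t) φ = pair (ν 0) φ + (∫ s in (0 : ℝ)..t, pair (ν s) (sumDeriv D))
      + ∫ s in (0 : ℝ)..t, drift C d lam β φ (ν s)

/-- The mild-form mean-field equation for the test function `φ`. -/
def MildEq (C d : ℕ) (lam : ℝ) (β : ℝ≥0 → ℝ) (ν : ℝ → Measure SState)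
    (φ : SState → ℝ) : Prop :=
  ∀ t ≥ (0 : ℝ),
    pair (ν t) φ = pair (ν 0) (fun u => φ (shift t u))
      + ∫ s in (0 : ℝ)..t, drift C d lam β (fun u => φ (shift (t - s) u)) (ν s)

/-- A mean-field model solution: a weakly continuous path of probability measures on `𝒰`
solving the weak-form equation for every `C_b^1` test function. -/
def IsMFSolution (C d : ℕ) (lam : ℝ) (β : ℝ≥0 → ℝ) (ν : ℝ → Measure SState) : Prop :=
  (∀ t ≥ (0 : ℝ), MemM1 C (ν t)) ∧ WeaklyContinuous ν ∧
  ∀ (φ : SState → ℝ) (D : (n : ℕ) → Fin n → (Fin n → ℝ≥0) → ℝ),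
    IsCb1 φ D → WeakEq C d lam β ν φ D

/-- A mild solution: weakly continuous path of probability measures on `𝒰` solving
the mild-form equation for every `C_b` test function. -/
def IsMildSolution (C d : ℕ) (lam : ℝ) (β : ℝ≥0 → ℝ) (ν : ℝ → Measure SState) : Prop :=
  (∀ t ≥ (0 : ℝ), MemM1 C (ν t)) ∧ WeaklyContinuous ν ∧
  ∀ φ : SState → ℝ, IsCb φ → MildEq C d lam β ν φ

/-- The total-variation style norm `‖ν¹ − ν²‖ = sup_{‖φ‖_∞ ≤ 1, φ ∈ C_b} |⟨ν¹,φ⟩ − ⟨ν²,φ⟩|`. -/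
def measDist (μ₁ μ₂ : Measure SState) : ℝ :=
  ⨆ φ : {φ : BoundedContinuousFunction SState ℝ // ‖φ‖ ≤ 1},
    |(∫ u, φ.1 u ∂μ₁) - ∫ u, φ.1 u ∂μ₂|

end MFModel
end

namespace MFModel


section Infra

lemma measurable_mk (n : ℕ) :
    Measurable (fun x : Fin n → ℝ≥0 => (⟨n, x⟩ : SState)) := by
  intro s hs
  exact MeasurableSpace.measurableSet_iInf.1 hs n

lemma measurableSet_image_mk {n : ℕ} {s : Set (Fin n → ℝ≥0)} (hs : MeasurableSet s) :
    MeasurableSet ((fun x : Fin n → ℝ≥0 => (⟨n, x⟩ : SState)) '' s) := by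
  refine MeasurableSpace.measurableSet_iInf.2 fun a => ?_
  show MeasurableSet (Sigma.mk a ⁻¹' ((fun x : Fin n → ℝ≥0 => (⟨n, x⟩ : SState)) '' s))
  rcases eq_or_ne n a with rfl | han
  · have : Sigma.mk n ⁻¹' ((fun x : Fin n → ℝ≥0 => (⟨n, x⟩ : SState)) '' s) = s := by
      ext x
      simp only [Set.mem_preimage, Set.mem_image]
      constructor
      · rintro ⟨y, hy, h⟩
        cases sigma_mk_injective h
        exact hy
      · intro hx
        exact ⟨x, hx, rfl⟩
    rw [this]; exact hs
  · have : Sigma.mk a ⁻¹' ((fun x : Fin n → ℝ≥0 => (⟨n, x⟩ : SState)) '' s) = ∅ := by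
      ext x
      simp only [Set.mem_preimage, Set.mem_image, Set.mem_empty_iff_false, iff_false]
      rintro ⟨y, _, hy⟩
      exact han (congrArg Sigma.fst hy)
    rw [this]
    exact MeasurableSet.empty

lemma measurableEmbedding_mk (n : ℕ) :
    MeasurableEmbedding (fun x : Fin n → ℝ≥0 => (⟨n, x⟩ : SState)) :=
  ⟨fun a b h => sigma_mk_injective h, measurable_mk n, fun _ hs => measurableSet_image_mk hs⟩

instance : OpensMeasurableSpace SState :=
  ⟨MeasurableSpace.generateFrom_le fun s hs =>
    MeasurableSpace.measurableSet_iInf.2 fun a => ((isOpen_sigma_iff.1 hs a).measurableSet)⟩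

lemma level_eq_range (n : ℕ) :
    level n = Set.range (fun x : Fin n → ℝ≥0 => (⟨n, x⟩ : SState)) := by
  ext u
  obtain ⟨m, x⟩ := u
  constructor
  · rintro (rfl : m = n)
    exact ⟨x, rfl⟩
  · rintro ⟨y, h⟩
    exact (congrArg Sigma.fst h).symm

lemma measurableSet_level (n : ℕ) : MeasurableSet (level n) := by
  rw [level_eq_range, ← Set.image_univ]
  exact measurableSet_image_mk MeasurableSet.univ

lemma disjoint_level {i j : ℕ} (hij : i ≠ j) : Disjoint (level i) (level j) := by
  rw [Set.disjoint_left]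
  rintro u (hi : u.1 = i) (hj : u.1 = j)
  exact hij (hi ▸ hj)

/-- Extend a function on the level-`n` fiber by zero to all of `SState`. -/
def extend (n : ℕ) (h : (Fin n → ℝ≥0) → ℝ) : SState → ℝ :=
  fun u => if hu : u.1 = n then h (fun i => u.2 (Fin.cast hu.symm i)) else 0

lemma extend_mk (n : ℕ) (h : (Fin n → ℝ≥0) → ℝ) (x : Fin n → ℝ≥0) :
    extend n h ⟨n, x⟩ = h x := by
  rw [extend, dif_pos rfl]
  rfl

lemma extend_ne {n : ℕ} {h : (Fin n → ℝ≥0) → ℝ} {u : SState} (hu : u.1 ≠ n) :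
    extend n h u = 0 := dif_neg hu

lemma abs_extend_le {n : ℕ} {h : (Fin n → ℝ≥0) → ℝ} {M : ℝ} (hM : 0 ≤ M)
    (hb : ∀ x, |h x| ≤ M) (u : SState) : |extend n h u| ≤ M := by
  rw [extend]
  split
  · exact hb _
  · simpa using hM

lemma continuous_extend {n : ℕ} {h : (Fin n → ℝ≥0) → ℝ} (hc : Continuous h) :
    Continuous (extend n h) := by
  apply continuous_sigma
  intro m
  rcases eq_or_ne n m with rfl | hnm
  · have : (fun x : Fin n → ℝ≥0 => extend n h ⟨n, x⟩) = h := funext fun x => extend_mk n h x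
    rw [this]; exact hc
  · have : (fun x : Fin m → ℝ≥0 => extend n h ⟨m, x⟩) = fun _ => 0 :=
      funext fun x => extend_ne hnm.symm
    rw [this]; exact continuous_const

lemma fiber_apply_univ (ν : Measure SState) (n : ℕ) :
    fiber ν n Set.univ = ν (level n) := by
  rw [fiber, (measurableEmbedding_mk n).comap_apply, Set.image_univ, ← level_eq_range]

lemma isFiniteMeasure_fiber (ν : Measure SState) [IsFiniteMeasure ν] (n : ℕ) :
    IsFiniteMeasure (fiber ν n) :=
  ⟨by rw [fiber_apply_univ]; exact measure_lt_top ν _⟩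

lemma integrable_of_bounded {α : Type*} [MeasurableSpace α] [TopologicalSpace α]
    [OpensMeasurableSpace α] (μ : Measure α) [IsFiniteMeasure μ] {f : α → ℝ}
    (hf : Continuous f) (M : ℝ) (hM : ∀ x, |f x| ≤ M) : Integrable f μ :=
  (integrable_const M).mono' hf.aestronglyMeasurable
    (Filter.Eventually.of_forall fun x => by simpa [Real.norm_eq_abs] using hM x)

lemma integral_extend {n : ℕ} {h : (Fin n → ℝ≥0) → ℝ} (hc : Continuous h)
    (ν : Measure SState) :
    ∫ u, extend n h u ∂ν = ∫ x, h x ∂(fiber ν n) := by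
  have he := measurableEmbedding_mk n
  have h1 : ∫ x, h x ∂(fiber ν n)
      = ∫ u, extend n h u
          ∂((Measure.comap (fun x : Fin n → ℝ≥0 => (⟨n, x⟩ : SState)) ν).map
              (fun x : Fin n → ℝ≥0 => (⟨n, x⟩ : SState))) := by
    rw [he.integral_map]
    congr 1
    funext x
    rw [extend_mk]
  rw [fiber] at h1 ⊢
  rw [h1, he.map_comap]
  exact (setIntegral_eq_integral_of_forall_compl_eq_zero fun u hu =>
    extend_ne fun h' => hu (by rw [← level_eq_range]; exact h')).symm

end Infra
section Dist

lemma abs_integral_bcf_le (μ : Measure SState) [IsProbabilityMeasure μ]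
    (φ : BoundedContinuousFunction SState ℝ) : |∫ u, φ u ∂μ| ≤ ‖φ‖ := by
  simpa [Real.norm_eq_abs] using φ.norm_integral_le_norm μ

lemma bddAbove_measDist (μ₁ μ₂ : Measure SState) [IsProbabilityMeasure μ₁]
    [IsProbabilityMeasure μ₂] :
    BddAbove (Set.range fun φ : {φ : BoundedContinuousFunction SState ℝ // ‖φ‖ ≤ 1} =>
      |(∫ u, φ.1 u ∂μ₁) - ∫ u, φ.1 u ∂μ₂|) := by
  refine ⟨2, ?_⟩
  rintro x ⟨φ, rfl⟩
  have h1 := (abs_integral_bcf_le μ₁ φ.1).trans φ.2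
  have h2 := (abs_integral_bcf_le μ₂ φ.1).trans φ.2
  calc |(∫ u, φ.1 u ∂μ₁) - ∫ u, φ.1 u ∂μ₂|
      ≤ |∫ u, φ.1 u ∂μ₁| + |∫ u, φ.1 u ∂μ₂| := abs_sub _ _
    _ ≤ 2 := by linarith

lemma measDist_nonneg (μ₁ μ₂ : Measure SState) [IsProbabilityMeasure μ₁]
    [IsProbabilityMeasure μ₂] : 0 ≤ measDist μ₁ μ₂ := by
  haveI : Nonempty {φ : BoundedContinuousFunction SState ℝ // ‖φ‖ ≤ 1} := ⟨⟨0, by simp⟩⟩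
  have h := le_ciSup (bddAbove_measDist μ₁ μ₂)
    (⟨0, by simp⟩ : {φ : BoundedContinuousFunction SState ℝ // ‖φ‖ ≤ 1})
  simpa [measDist] using h

lemma measDist_le_two (μ₁ μ₂ : Measure SState) [IsProbabilityMeasure μ₁]
    [IsProbabilityMeasure μ₂] : measDist μ₁ μ₂ ≤ 2 := by
  haveI : Nonempty {φ : BoundedContinuousFunction SState ℝ // ‖φ‖ ≤ 1} := ⟨⟨0, by simp⟩⟩
  refine ciSup_le fun φ => ?_
  have h1 := (abs_integral_bcf_le μ₁ φ.1).trans φ.2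
  have h2 := (abs_integral_bcf_le μ₂ φ.1).trans φ.2
  calc |(∫ u, φ.1 u ∂μ₁) - ∫ u, φ.1 u ∂μ₂|
      ≤ |∫ u, φ.1 u ∂μ₁| + |∫ u, φ.1 u ∂μ₂| := abs_sub _ _
    _ ≤ 2 := by linarith

lemma pair_le_measDist {μ₁ μ₂ : Measure SState} [IsProbabilityMeasure μ₁]
    [IsProbabilityMeasure μ₂] {f : SState → ℝ} (hf : Continuous f) {M : ℝ}
    (hM : ∀ u, |f u| ≤ M) :
    |(∫ u, f u ∂μ₁) - ∫ u, f u ∂μ₂| ≤ M * measDist μ₁ μ₂ := by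
  have hM0 : 0 ≤ M := le_trans (abs_nonneg _) (hM emptyState)
  rcases eq_or_lt_of_le hM0 with h | h
  · have hf0 : f = fun _ => (0 : ℝ) := funext fun u => by
      have := hM u; rw [← h] at this
      exact abs_nonpos_iff.1 this
    rw [hf0]
    simp only [integral_const, smul_zero, sub_zero, abs_zero]
    rw [← h, zero_mul]
  · set φ : BoundedContinuousFunction SState ℝ :=
      BoundedContinuousFunction.ofNormedAddCommGroup (fun u => f u * M⁻¹)
        (hf.mul continuous_const) 1 (fun u => by
          rw [Real.norm_eq_abs, abs_mul, abs_inv, abs_of_pos h]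
          calc |f u| * M⁻¹ ≤ M * M⁻¹ :=
                mul_le_mul_of_nonneg_right (hM u) (inv_nonneg.2 hM0)
            _ = 1 := mul_inv_cancel₀ (ne_of_gt h)) with hφdef
    have hφ1 : ‖φ‖ ≤ 1 :=
      BoundedContinuousFunction.norm_ofNormedAddCommGroup_le _ zero_le_one _
    have key : |(∫ u, φ u ∂μ₁) - ∫ u, φ u ∂μ₂| ≤ measDist μ₁ μ₂ :=
      le_ciSup (bddAbove_measDist μ₁ μ₂)
        (⟨φ, hφ1⟩ : {φ : BoundedContinuousFunction SState ℝ // ‖φ‖ ≤ 1})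
    have hint : ∀ μ : Measure SState, ∫ u, φ u ∂μ = (∫ u, f u ∂μ) * M⁻¹ := by
      intro μ
      have : ⇑φ = fun u => f u * M⁻¹ := rfl
      rw [this, integral_mul_const]
    rw [hint, hint] at key
    have habs : |(∫ u, f u ∂μ₁) - ∫ u, f u ∂μ₂| =
        M * |(∫ u, f u ∂μ₁) * M⁻¹ - (∫ u, f u ∂μ₂) * M⁻¹| := by
      rw [← sub_mul, abs_mul, abs_inv, abs_of_pos h]
      field_simp
    rw [habs]
    exact mul_le_mul_of_nonneg_left key hM0

/-- Indicator of a finite set of levels, as a continuous function. -/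
def chi (A : Finset ℕ) : SState → ℝ := fun u => if u.1 ∈ A then 1 else 0

lemma continuous_chi (A : Finset ℕ) : Continuous (chi A) := by
  apply continuous_sigma
  intro m
  have : (fun x : Fin m → ℝ≥0 => chi A ⟨m, x⟩) = fun _ => if m ∈ A then (1:ℝ) else 0 := rfl
  rw [this]
  exact continuous_const

lemma abs_chi_le (A : Finset ℕ) (u : SState) : |chi A u| ≤ 1 := by
  rw [chi]
  split <;> simp

lemma integral_chi (ν : Measure SState) [IsFiniteMeasure ν] (A : Finset ℕ) :
    ∫ u, chi A u ∂ν = ∑ m ∈ A, (ν (level m)).toReal := by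
  classical
  have hset : chi A = Set.indicator (⋃ m ∈ A, level m) (1 : SState → ℝ) := by
    funext u
    rw [chi, Set.indicator_apply]
    by_cases h : u.1 ∈ A
    · have hu : u ∈ ⋃ m ∈ A, level m := Set.mem_biUnion h rfl
      rw [if_pos h, if_pos hu, Pi.one_apply]
    · rw [if_neg h, if_neg]
      intro hu
      obtain ⟨m, hm, hum⟩ := Set.mem_iUnion₂.1 hu
      exact h (hum ▸ hm)
  have hmeas : MeasurableSet (⋃ m ∈ A, level m) :=
    MeasurableSet.biUnion A.countable_toSet fun m _ => measurableSet_level m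
  rw [hset, integral_indicator_one hmeas, measureReal_def,
    measure_biUnion_finset (fun i _ j _ hij => disjoint_level hij)
      (fun m _ => measurableSet_level m),
    ENNReal.toReal_sum (fun m _ => measure_ne_top ν _)]

lemma Rbar_eq_integral (C : ℕ) (ν : Measure SState) [IsFiniteMeasure ν] (n : ℕ) :
    Rbar C ν n = ∫ u, chi (Finset.Icc n C) u ∂ν := by
  rw [integral_chi, Rbar]

lemma sum_level_toReal_le (ν : Measure SState) [IsProbabilityMeasure ν] (s : Finset ℕ) :
    ∑ m ∈ s, (ν (level m)).toReal ≤ 1 := by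
  rw [← ENNReal.toReal_sum (fun m _ => measure_ne_top ν _)]
  have h1 : ∑ m ∈ s, ν (level m) = ν (⋃ m ∈ s, level m) :=
    (measure_biUnion_finset (fun i _ j _ hij => disjoint_level hij)
      (fun m _ => measurableSet_level m)).symm
  rw [h1]
  have : ν (⋃ m ∈ s, level m) ≤ 1 := by
    rw [← measure_univ (μ := ν)]
    exact measure_mono (Set.subset_univ _)
  have h2 := ENNReal.toReal_mono ENNReal.one_ne_top this
  simpa using h2

lemma Rbar_nonneg (C : ℕ) (ν : Measure SState) (n : ℕ) : 0 ≤ Rbar C ν n :=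
  Finset.sum_nonneg fun _ _ => ENNReal.toReal_nonneg

lemma Rbar_le_one (C : ℕ) (ν : Measure SState) [IsProbabilityMeasure ν] (n : ℕ) :
    Rbar C ν n ≤ 1 := sum_level_toReal_le ν _

lemma abs_Rbar_sub_le (C : ℕ) {ν₁ ν₂ : Measure SState} [IsProbabilityMeasure ν₁]
    [IsProbabilityMeasure ν₂] (n : ℕ) :
    |Rbar C ν₁ n - Rbar C ν₂ n| ≤ measDist ν₁ ν₂ := by
  rw [Rbar_eq_integral, Rbar_eq_integral]
  have := pair_le_measDist (μ₁ := ν₁) (μ₂ := ν₂) (continuous_chi (Finset.Icc n C))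
    (abs_chi_le (Finset.Icc n C))
  simpa using this

lemma Phi_nonneg (C d : ℕ) (ν : Measure SState) [IsProbabilityMeasure ν] (n : ℕ) :
    0 ≤ Phi C d ν n :=
  Finset.sum_nonneg fun k _ => mul_nonneg (pow_nonneg (Rbar_nonneg C ν n) k)
    (pow_nonneg (Rbar_nonneg C ν (n+1)) _)

lemma Phi_le_d (C d : ℕ) (ν : Measure SState) [IsProbabilityMeasure ν] (n : ℕ) :
    Phi C d ν n ≤ d := by
  calc Phi C d ν n ≤ ∑ _k ∈ Finset.range d, (1:ℝ) := by
        refine Finset.sum_le_sum fun k _ => ?_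
        calc Rbar C ν n ^ k * Rbar C ν (n+1) ^ (d-1-k) ≤ 1 * 1 := by
              apply mul_le_mul
              · exact pow_le_one₀ (Rbar_nonneg C ν n) (Rbar_le_one C ν n)
              · exact pow_le_one₀ (Rbar_nonneg C ν (n+1)) (Rbar_le_one C ν (n+1))
              · exact pow_nonneg (Rbar_nonneg C ν (n+1)) _
              · exact zero_le_one
          _ = 1 := one_mul 1
    _ = d := by simp

lemma abs_pow_sub_pow_le {x y : ℝ} (hx0 : 0 ≤ x) (hx1 : x ≤ 1) (hy0 : 0 ≤ y) (hy1 : y ≤ 1)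
    (k : ℕ) : |x ^ k - y ^ k| ≤ k * |x - y| := by
  induction k with
  | zero => simp
  | succ k ih =>
    have hxk : |x ^ k| ≤ 1 := by
      rw [abs_of_nonneg (pow_nonneg hx0 k)]
      exact pow_le_one₀ hx0 hx1
    have hy' : |y| ≤ 1 := by rw [abs_of_nonneg hy0]; exact hy1
    have key : x ^ (k+1) - y ^ (k+1) = x ^ k * (x - y) + y * (x ^ k - y ^ k) := by ring
    calc |x ^ (k+1) - y ^ (k+1)| = |x ^ k * (x - y) + y * (x ^ k - y ^ k)| := by rw [key]
      _ ≤ |x ^ k * (x - y)| + |y * (x ^ k - y ^ k)| := abs_add_le _ _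
      _ = |x ^ k| * |x - y| + |y| * |x ^ k - y ^ k| := by rw [abs_mul, abs_mul]
      _ ≤ 1 * |x - y| + 1 * (k * |x - y|) := by
          apply add_le_add
          · exact mul_le_mul_of_nonneg_right hxk (abs_nonneg _)
          · calc |y| * |x ^ k - y ^ k| ≤ 1 * |x ^ k - y ^ k| :=
                  mul_le_mul_of_nonneg_right hy' (abs_nonneg _)
              _ ≤ 1 * (k * |x - y|) := by rw [one_mul, one_mul]; exact ih
      _ = (k + 1 : ℕ) * |x - y| := by push_cast; ring

lemma abs_Phi_sub_le (C d : ℕ) {ν₁ ν₂ : Measure SState} [IsProbabilityMeasure ν₁]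
    [IsProbabilityMeasure ν₂] (n : ℕ) :
    |Phi C d ν₁ n - Phi C d ν₂ n| ≤ d * d * measDist ν₁ ν₂ := by
  have hΔ := measDist_nonneg ν₁ ν₂
  rw [Phi, Phi, ← Finset.sum_sub_distrib]
  calc |∑ k ∈ Finset.range d, (Rbar C ν₁ n ^ k * Rbar C ν₁ (n+1) ^ (d-1-k)
          - Rbar C ν₂ n ^ k * Rbar C ν₂ (n+1) ^ (d-1-k))|
      ≤ ∑ k ∈ Finset.range d, |Rbar C ν₁ n ^ k * Rbar C ν₁ (n+1) ^ (d-1-k)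
          - Rbar C ν₂ n ^ k * Rbar C ν₂ (n+1) ^ (d-1-k)| := Finset.abs_sum_le_sum_abs _ _
    _ ≤ ∑ _k ∈ Finset.range d, (d * measDist ν₁ ν₂) := by
        refine Finset.sum_le_sum fun k hk => ?_
        set x := Rbar C ν₁ n; set x' := Rbar C ν₂ n
        set y := Rbar C ν₁ (n+1); set y' := Rbar C ν₂ (n+1)
        have hx0 : 0 ≤ x := Rbar_nonneg _ _ _
        have hx1 : x ≤ 1 := Rbar_le_one _ _ _
        have hx'0 : 0 ≤ x' := Rbar_nonneg _ _ _
        have hx'1 : x' ≤ 1 := Rbar_le_one _ _ _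
        have hy0 : 0 ≤ y := Rbar_nonneg _ _ _
        have hy1 : y ≤ 1 := Rbar_le_one _ _ _
        have hy'0 : 0 ≤ y' := Rbar_nonneg _ _ _
        have hy'1 : y' ≤ 1 := Rbar_le_one _ _ _
        have hkey : x ^ k * y ^ (d-1-k) - x' ^ k * y' ^ (d-1-k)
            = (x ^ k - x' ^ k) * y ^ (d-1-k) + x' ^ k * (y ^ (d-1-k) - y' ^ (d-1-k)) := by ring
        have h1 : |(x ^ k - x' ^ k) * y ^ (d-1-k)| ≤ k * |x - x'| := by
          rw [abs_mul]
          calc |x ^ k - x' ^ k| * |y ^ (d-1-k)| ≤ |x ^ k - x' ^ k| * 1 := by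
                apply mul_le_mul_of_nonneg_left _ (abs_nonneg _)
                rw [abs_of_nonneg (pow_nonneg hy0 _)]
                exact pow_le_one₀ hy0 hy1
            _ = |x ^ k - x' ^ k| := mul_one _
            _ ≤ k * |x - x'| := abs_pow_sub_pow_le hx0 hx1 hx'0 hx'1 k
        have h2 : |x' ^ k * (y ^ (d-1-k) - y' ^ (d-1-k))| ≤ (d-1-k : ℕ) * |y - y'| := by
          rw [abs_mul]
          calc |x' ^ k| * |y ^ (d-1-k) - y' ^ (d-1-k)|
              ≤ 1 * |y ^ (d-1-k) - y' ^ (d-1-k)| := by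
                apply mul_le_mul_of_nonneg_right _ (abs_nonneg _)
                rw [abs_of_nonneg (pow_nonneg hx'0 _)]
                exact pow_le_one₀ hx'0 hx'1
            _ = |y ^ (d-1-k) - y' ^ (d-1-k)| := one_mul _
            _ ≤ (d-1-k : ℕ) * |y - y'| := abs_pow_sub_pow_le hy0 hy1 hy'0 hy'1 _
        have hxx : |x - x'| ≤ measDist ν₁ ν₂ := abs_Rbar_sub_le C n
        have hyy : |y - y'| ≤ measDist ν₁ ν₂ := abs_Rbar_sub_le C (n+1)
        have hk' : (k : ℝ) + (d-1-k : ℕ) ≤ d := by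
          have hkd : k < d := Finset.mem_range.1 hk
          have hle : k + (d - 1 - k) ≤ d := by omega
          calc (k : ℝ) + ((d - 1 - k : ℕ) : ℝ) = ((k + (d - 1 - k) : ℕ) : ℝ) := by push_cast; ring
            _ ≤ (d : ℝ) := Nat.cast_le.2 hle
        calc |x ^ k * y ^ (d-1-k) - x' ^ k * y' ^ (d-1-k)|
            ≤ |(x ^ k - x' ^ k) * y ^ (d-1-k)| + |x' ^ k * (y ^ (d-1-k) - y' ^ (d-1-k))| := by
              rw [hkey]; exact abs_add_le _ _
          _ ≤ k * |x - x'| + (d-1-k : ℕ) * |y - y'| := add_le_add h1 h2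
          _ ≤ k * measDist ν₁ ν₂ + (d-1-k : ℕ) * measDist ν₁ ν₂ := by
              apply add_le_add
              · exact mul_le_mul_of_nonneg_left hxx (Nat.cast_nonneg k)
              · exact mul_le_mul_of_nonneg_left hyy (Nat.cast_nonneg _)
          _ = ((k : ℝ) + (d-1-k : ℕ)) * measDist ν₁ ν₂ := by ring
          _ ≤ d * measDist ν₁ ν₂ := mul_le_mul_of_nonneg_right hk' hΔ
    _ = d * d * measDist ν₁ ν₂ := by
        rw [Finset.sum_const, Finset.card_range]
        push_cast
        ring

end Dist
section Kern

variable {β : ℝ≥0 → ℝ} {ψ : SState → ℝ} {Mβ : ℝ}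

/-- Death-term kernel on the level-`(n+1)` fiber. -/
def dker (β : ℝ≥0 → ℝ) (ψ : SState → ℝ) (n : ℕ) : (Fin (n+1) → ℝ≥0) → ℝ :=
  fun x => ∑ j : Fin (n+1), β (x j) * (ψ ⟨n, x ∘ j.succAbove⟩ - ψ ⟨n+1, x⟩)

/-- Arrival-term kernel on the level-`n` fiber. -/
def aker (ψ : SState → ℝ) (n : ℕ) : (Fin n → ℝ≥0) → ℝ :=
  fun x => ∑ j : Fin (n+1), (ψ ⟨n+1, j.insertNth 0 x⟩ - ψ ⟨n, x⟩)

/-- The death part of the drift as a single function on `SState`. -/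
def deathFn (C : ℕ) (β : ℝ≥0 → ℝ) (ψ : SState → ℝ) : SState → ℝ :=
  fun u => ∑ n ∈ Finset.range C, extend (n+1) (dker β ψ n) u

/-- The arrival part of the drift as a single function on `SState`, with
coefficients `a n` multiplying the level-`n` part. -/
def arrFn (C : ℕ) (a : ℕ → ℝ) (ψ : SState → ℝ) : SState → ℝ :=
  fun u => ∑ n ∈ Finset.range C, a n * extend n (aker ψ n) u

lemma continuous_dterm (hβ : Continuous β) (hψ : Continuous ψ) (n : ℕ) (j : Fin (n+1)) :
    Continuous fun x : Fin (n+1) → ℝ≥0 => β (x j) * (ψ ⟨n, x ∘ j.succAbove⟩ - ψ ⟨n+1, x⟩) := by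
  apply Continuous.mul
  · exact hβ.comp (continuous_apply j)
  · apply Continuous.sub
    · exact hψ.comp (continuous_sigmaMk.comp (continuous_pi fun i => continuous_apply _))
    · exact hψ.comp continuous_sigmaMk

lemma continuous_insertNth {n : ℕ} (j : Fin (n+1)) :
    Continuous fun x : Fin n → ℝ≥0 => (j.insertNth 0 x : Fin (n+1) → ℝ≥0) := by
  apply continuous_pi
  intro i
  rcases eq_or_ne i j with rfl | hij
  · simp only [Fin.insertNth_apply_same]
    exact continuous_const
  · obtain ⟨l, rfl⟩ := Fin.exists_succAbove_eq hij
    simp only [Fin.insertNth_apply_succAbove]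
    exact continuous_apply l

lemma continuous_aterm (hψ : Continuous ψ) (n : ℕ) (j : Fin (n+1)) :
    Continuous fun x : Fin n → ℝ≥0 => ψ ⟨n+1, j.insertNth 0 x⟩ - ψ ⟨n, x⟩ := by
  apply Continuous.sub
  · exact hψ.comp (continuous_sigmaMk.comp (continuous_insertNth j))
  · exact hψ.comp continuous_sigmaMk

lemma continuous_dker (hβ : Continuous β) (hψ : Continuous ψ) (n : ℕ) :
    Continuous (dker β ψ n) :=
  continuous_finset_sum _ fun j _ => continuous_dterm hβ hψ n j

lemma continuous_aker (hψ : Continuous ψ) (n : ℕ) : Continuous (aker ψ n) :=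
  continuous_finset_sum _ fun j _ => continuous_aterm hψ n j

lemma abs_dterm_le (hβb : ∀ x, |β x| ≤ Mβ) (hψ1 : ∀ u, |ψ u| ≤ 1) (n : ℕ) (j : Fin (n+1))
    (x : Fin (n+1) → ℝ≥0) :
    |β (x j) * (ψ ⟨n, x ∘ j.succAbove⟩ - ψ ⟨n+1, x⟩)| ≤ Mβ * 2 := by
  rw [abs_mul]
  apply mul_le_mul (hβb _) _ (abs_nonneg _) (le_trans (abs_nonneg _) (hβb (x j)))
  calc |ψ ⟨n, x ∘ j.succAbove⟩ - ψ ⟨n+1, x⟩| ≤ |ψ ⟨n, x ∘ j.succAbove⟩| + |ψ ⟨n+1, x⟩| :=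
        abs_sub _ _
    _ ≤ 2 := by have := hψ1 ⟨n, x ∘ j.succAbove⟩; have := hψ1 ⟨n+1, x⟩; linarith

lemma abs_aterm_le (hψ1 : ∀ u, |ψ u| ≤ 1) (n : ℕ) (j : Fin (n+1)) (x : Fin n → ℝ≥0) :
    |ψ ⟨n+1, j.insertNth 0 x⟩ - ψ ⟨n, x⟩| ≤ 2 := by
  calc |ψ ⟨n+1, j.insertNth 0 x⟩ - ψ ⟨n, x⟩| ≤ |ψ ⟨n+1, j.insertNth 0 x⟩| + |ψ ⟨n, x⟩| :=
        abs_sub _ _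
    _ ≤ 2 := by have := hψ1 ⟨n+1, j.insertNth 0 x⟩; have := hψ1 ⟨n, x⟩; linarith

lemma abs_dker_le (hβb : ∀ x, |β x| ≤ Mβ) (hψ1 : ∀ u, |ψ u| ≤ 1) (n : ℕ)
    (x : Fin (n+1) → ℝ≥0) : |dker β ψ n x| ≤ (n+1) * (Mβ * 2) := by
  rw [dker]
  calc |∑ j : Fin (n+1), β (x j) * (ψ ⟨n, x ∘ j.succAbove⟩ - ψ ⟨n+1, x⟩)|
      ≤ ∑ j : Fin (n+1), |β (x j) * (ψ ⟨n, x ∘ j.succAbove⟩ - ψ ⟨n+1, x⟩)| :=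
        Finset.abs_sum_le_sum_abs _ _
    _ ≤ ∑ _j : Fin (n+1), (Mβ * 2) := Finset.sum_le_sum fun j _ => abs_dterm_le hβb hψ1 n j x
    _ = (n+1) * (Mβ * 2) := by simp [Finset.sum_const, mul_comm]

lemma abs_aker_le (hψ1 : ∀ u, |ψ u| ≤ 1) (n : ℕ) (x : Fin n → ℝ≥0) :
    |aker ψ n x| ≤ (n+1) * 2 := by
  rw [aker]
  calc |∑ j : Fin (n+1), (ψ ⟨n+1, j.insertNth 0 x⟩ - ψ ⟨n, x⟩)|
      ≤ ∑ j : Fin (n+1), |ψ ⟨n+1, j.insertNth 0 x⟩ - ψ ⟨n, x⟩| := Finset.abs_sum_le_sum_abs _ _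
    _ ≤ ∑ _j : Fin (n+1), (2:ℝ) := Finset.sum_le_sum fun j _ => abs_aterm_le hψ1 n j x
    _ = (n+1) * 2 := by simp [Finset.sum_const, mul_comm]

lemma continuous_deathFn (C : ℕ) (hβ : Continuous β) (hψ : Continuous ψ) :
    Continuous (deathFn C β ψ) :=
  continuous_finset_sum _ fun n _ => continuous_extend (continuous_dker hβ hψ n)

lemma continuous_arrFn (C : ℕ) (a : ℕ → ℝ) (hψ : Continuous ψ) :
    Continuous (arrFn C a ψ) :=
  continuous_finset_sum _ fun n _ =>
    continuous_const.mul (continuous_extend (continuous_aker hψ n))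

lemma Mβ_nonneg (hβb : ∀ x, |β x| ≤ Mβ) : 0 ≤ Mβ :=
  le_trans (abs_nonneg _) (hβb 0)

lemma abs_deathFn_le (C : ℕ) (hβb : ∀ x, |β x| ≤ Mβ) (hψ1 : ∀ u, |ψ u| ≤ 1) (u : SState) :
    |deathFn C β ψ u| ≤ 2 * C * Mβ := by
  have hMβ := Mβ_nonneg hβb
  rw [deathFn]
  by_cases hex : ∃ m ∈ Finset.range C, u.1 = m + 1
  · obtain ⟨m, hm, hum⟩ := hex
    rw [Finset.sum_eq_single_of_mem m hm (fun n hn hne => extend_ne (fun h => hne (by omega)))]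
    refine abs_extend_le (by positivity) (fun x => ?_) u
    calc |dker β ψ m x| ≤ (m+1) * (Mβ * 2) := abs_dker_le hβb hψ1 m x
      _ ≤ C * (Mβ * 2) := by
          apply mul_le_mul_of_nonneg_right _ (by positivity)
          have : m + 1 ≤ C := Finset.mem_range.1 hm
          exact_mod_cast this
      _ = 2 * C * Mβ := by ring
  · rw [Finset.sum_eq_zero fun n hn => extend_ne fun h => hex ⟨n, hn, h⟩]
    simp only [abs_zero]
    positivity

lemma abs_arrFn_le (C d : ℕ) {a : ℕ → ℝ} (ha : ∀ n, |a n| ≤ d / (n+1))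
    (hψ1 : ∀ u, |ψ u| ≤ 1) (u : SState) : |arrFn C a ψ u| ≤ 2 * d := by
  rw [arrFn]
  by_cases hu : u.1 ∈ Finset.range C
  · rw [Finset.sum_eq_single_of_mem u.1 hu
      (fun n hn hne => by rw [extend_ne fun h => hne h.symm, mul_zero])]
    rw [abs_mul]
    calc |a u.1| * |extend u.1 (aker ψ u.1) u|
        ≤ (d / (u.1+1)) * ((u.1+1) * 2) := by
          apply mul_le_mul (ha u.1) (abs_extend_le (by positivity) (abs_aker_le hψ1 u.1) u)
            (abs_nonneg _) (by positivity)
      _ = 2 * d := by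
          have h0 : ((u.1 : ℝ) + 1) ≠ 0 := by positivity
          field_simp
  · rw [Finset.sum_eq_zero fun n hn => by
      rw [extend_ne fun h => hu (h ▸ hn), mul_zero]]
    simp only [abs_zero]
    positivity

lemma integrable_dterm (ν : Measure SState) [IsFiniteMeasure ν] (hβ : Continuous β)
    (hβb : ∀ x, |β x| ≤ Mβ) (hψ : Continuous ψ) (hψ1 : ∀ u, |ψ u| ≤ 1) (n : ℕ)
    (j : Fin (n+1)) :
    Integrable (fun x : Fin (n+1) → ℝ≥0 =>
      β (x j) * (ψ ⟨n, x ∘ j.succAbove⟩ - ψ ⟨n+1, x⟩)) (fiber ν (n+1)) := by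
  haveI := isFiniteMeasure_fiber ν (n+1)
  exact integrable_of_bounded _ (continuous_dterm hβ hψ n j) (Mβ * 2)
    (abs_dterm_le hβb hψ1 n j)

lemma integrable_aterm (ν : Measure SState) [IsFiniteMeasure ν]
    (hψ : Continuous ψ) (hψ1 : ∀ u, |ψ u| ≤ 1) (n : ℕ) (j : Fin (n+1)) :
    Integrable (fun x : Fin n → ℝ≥0 =>
      ψ ⟨n+1, j.insertNth 0 x⟩ - ψ ⟨n, x⟩) (fiber ν n) := by
  haveI := isFiniteMeasure_fiber ν n
  exact integrable_of_bounded _ (continuous_aterm hψ n j) 2 (abs_aterm_le hψ1 n j)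

lemma integral_deathFn (C : ℕ) (ν : Measure SState) [IsFiniteMeasure ν] (hβ : Continuous β)
    (hβb : ∀ x, |β x| ≤ Mβ) (hψ : Continuous ψ) (hψ1 : ∀ u, |ψ u| ≤ 1) :
    ∫ u, deathFn C β ψ u ∂ν
      = ∑ n ∈ Finset.range C, ∑ j : Fin (n+1),
          ∫ x, β (x j) * (ψ ⟨n, x ∘ j.succAbove⟩ - ψ ⟨n+1, x⟩) ∂(fiber ν (n+1)) := by
  have hMβ := Mβ_nonneg hβb
  simp only [deathFn]
  rw [integral_finset_sum _ (fun n _ => integrable_of_bounded ν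
    (continuous_extend (continuous_dker hβ hψ n)) ((n+1) * (Mβ * 2))
    (abs_extend_le (by positivity) (abs_dker_le hβb hψ1 n)))]
  refine Finset.sum_congr rfl fun n _ => ?_
  rw [integral_extend (continuous_dker hβ hψ n) ν]
  haveI := isFiniteMeasure_fiber ν (n+1)
  simp only [dker]
  exact integral_finset_sum _ fun j _ => integrable_dterm ν hβ hβb hψ hψ1 n j

lemma integral_aker_fiber (ν : Measure SState) [IsFiniteMeasure ν]
    (hψ : Continuous ψ) (hψ1 : ∀ u, |ψ u| ≤ 1) (n : ℕ) :
    ∫ x, aker ψ n x ∂(fiber ν n)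
      = ∑ j : Fin (n+1), ∫ x, (ψ ⟨n+1, j.insertNth 0 x⟩ - ψ ⟨n, x⟩) ∂(fiber ν n) := by
  haveI := isFiniteMeasure_fiber ν n
  simp only [aker]
  exact integral_finset_sum _ fun j _ => integrable_aterm ν hψ hψ1 n j

lemma integral_arrFn (C : ℕ) (a : ℕ → ℝ) (ν : Measure SState) [IsFiniteMeasure ν]
    (hψ : Continuous ψ) (hψ1 : ∀ u, |ψ u| ≤ 1) :
    ∫ u, arrFn C a ψ u ∂ν
      = ∑ n ∈ Finset.range C, a n * ∫ x, aker ψ n x ∂(fiber ν n) := by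
  simp only [arrFn]
  rw [integral_finset_sum _ (fun n _ => (integrable_of_bounded ν
    (continuous_extend (continuous_aker hψ n)) ((n+1) * 2)
    (abs_extend_le (by positivity) (abs_aker_le hψ1 n))).const_mul (a n))]
  refine Finset.sum_congr rfl fun n _ => ?_
  rw [integral_const_mul, integral_extend (continuous_aker hψ n) ν]

lemma abs_integral_aker_le (ν : Measure SState) [IsFiniteMeasure ν]
    (hψ1 : ∀ u, |ψ u| ≤ 1) (n : ℕ) :
    |∫ x, aker ψ n x ∂(fiber ν n)| ≤ ((n+1) * 2) * (ν (level n)).toReal := by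
  haveI := isFiniteMeasure_fiber ν n
  have h := norm_integral_le_of_norm_le_const (μ := fiber ν n)
    (f := aker ψ n) (C := (n+1) * 2)
    (Filter.Eventually.of_forall fun x => by
      simpa [Real.norm_eq_abs] using abs_aker_le hψ1 n x)
  rw [Real.norm_eq_abs, measureReal_def, fiber_apply_univ] at h
  exact h

lemma range_eq_insert_Icc {C : ℕ} (hC : 1 ≤ C) :
    Finset.range C = insert 0 (Finset.Icc 1 (C-1)) := by
  ext m
  simp only [Finset.mem_range, Finset.mem_insert, Finset.mem_Icc]
  omega

/-- The drift in paired form. -/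
lemma drift_eq (C d : ℕ) (hC : 1 ≤ C) (lam : ℝ) (ν : Measure SState)
    [IsProbabilityMeasure ν] (hβ : Continuous β) (hβb : ∀ x, |β x| ≤ Mβ)
    (hψ : Continuous ψ) (hψ1 : ∀ u, |ψ u| ≤ 1) :
    drift C d lam β ψ ν
      = ∫ u, deathFn C β ψ u ∂ν
        + lam * ∑ n ∈ Finset.range C,
            (Phi C d ν n / (n + 1)) * ∫ x, aker ψ n x ∂(fiber ν n) := by
  rw [drift, integral_deathFn C ν hβ hβb hψ hψ1]
  congr 1
  congr 1
  rw [range_eq_insert_Icc hC, Finset.sum_insert (by simp)]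
  congr 1
  · -- the level-0 term
    have haker0 : aker ψ 0 = fun _ : Fin 0 → ℝ≥0 => (ψ oneZero - ψ emptyState) := by
      funext x
      rw [aker, Fin.sum_univ_one]
      congr 1
      · congr 1
        have hfun : (0:Fin 1).insertNth 0 x = fun _ : Fin 1 => (0:ℝ≥0) := by
          funext i
          rw [Fin.eq_zero i, Fin.insertNth_apply_same]
        exact congrArg (fun f => (⟨1, f⟩ : SState)) hfun
      · congr 1
        exact congrArg (fun f => (⟨0, f⟩ : SState)) (funext fun i => i.elim0)
    haveI := isFiniteMeasure_fiber ν 0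
    rw [haker0, integral_const, measureReal_def, fiber_apply_univ, smul_eq_mul]
    push_cast
    ring
  · refine Finset.sum_congr rfl fun n _ => ?_
    rw [integral_aker_fiber ν hψ hψ1 n]

end Kern
section Bound

variable {β : ℝ≥0 → ℝ} {ψ : SState → ℝ} {Mβ : ℝ}

lemma abs_a_le (C d : ℕ) (ν : Measure SState) [IsProbabilityMeasure ν] (n : ℕ) :
    |Phi C d ν n / (n + 1)| ≤ d / (n + 1) := by
  rw [abs_of_nonneg (div_nonneg (Phi_nonneg C d ν n) (by positivity))]
  gcongr
  exact Phi_le_d C d ν n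

lemma abs_drift_le (C d : ℕ) (hC : 1 ≤ C) {lam : ℝ} (hlam : 0 < lam)
    (ν : Measure SState) [IsProbabilityMeasure ν] (hβ : Continuous β)
    (hβb : ∀ x, |β x| ≤ Mβ) (hψ : Continuous ψ) (hψ1 : ∀ u, |ψ u| ≤ 1) :
    |drift C d lam β ψ ν| ≤ 2 * C * Mβ + 2 * d * lam := by
  have hMβ := Mβ_nonneg hβb
  rw [drift_eq C d hC lam ν hβ hβb hψ hψ1]
  have h1 : |∫ u, deathFn C β ψ u ∂ν| ≤ 2 * C * Mβ := by
    have h := norm_integral_le_of_norm_le_const (μ := ν) (f := deathFn C β ψ)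
      (C := 2 * C * Mβ)
      (Filter.Eventually.of_forall fun u => by
        simpa [Real.norm_eq_abs] using abs_deathFn_le C hβb hψ1 u)
    rw [Real.norm_eq_abs, measureReal_def, measure_univ, ENNReal.toReal_one, mul_one] at h
    exact h
  have h2 : |∑ n ∈ Finset.range C,
      (Phi C d ν n / (n + 1)) * ∫ x, aker ψ n x ∂(fiber ν n)| ≤ 2 * d := by
    calc |∑ n ∈ Finset.range C, (Phi C d ν n / (n + 1)) * ∫ x, aker ψ n x ∂(fiber ν n)|
        ≤ ∑ n ∈ Finset.range C,
            |(Phi C d ν n / (n + 1)) * ∫ x, aker ψ n x ∂(fiber ν n)| :=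
          Finset.abs_sum_le_sum_abs _ _
      _ ≤ ∑ n ∈ Finset.range C, (2 * d) * (ν (level n)).toReal := by
          refine Finset.sum_le_sum fun n _ => ?_
          rw [abs_mul]
          calc |Phi C d ν n / (n + 1)| * |∫ x, aker ψ n x ∂(fiber ν n)|
              ≤ (d / (n+1)) * (((n+1) * 2) * (ν (level n)).toReal) :=
                mul_le_mul (abs_a_le C d ν n) (abs_integral_aker_le ν hψ1 n)
                  (abs_nonneg _) (by positivity)
            _ = (2 * d) * (ν (level n)).toReal := by
                have h0 : ((n : ℝ) + 1) ≠ 0 := by positivity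
                field_simp
      _ = (2 * d) * ∑ n ∈ Finset.range C, (ν (level n)).toReal := (Finset.mul_sum _ _ _).symm
      _ ≤ (2 * d) * 1 :=
          mul_le_mul_of_nonneg_left (sum_level_toReal_le ν _) (by positivity)
      _ = 2 * d := mul_one _
  calc |∫ u, deathFn C β ψ u ∂ν + lam * ∑ n ∈ Finset.range C,
        (Phi C d ν n / (n + 1)) * ∫ x, aker ψ n x ∂(fiber ν n)|
      ≤ |∫ u, deathFn C β ψ u ∂ν| + |lam * ∑ n ∈ Finset.range C,
        (Phi C d ν n / (n + 1)) * ∫ x, aker ψ n x ∂(fiber ν n)| := abs_add_le _ _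
    _ ≤ 2 * C * Mβ + 2 * d * lam := by
        rw [abs_mul, abs_of_pos hlam]
        have := mul_le_mul_of_nonneg_left h2 hlam.le
        linarith

lemma arr_sum_diff_le (C d : ℕ) {ν₁ ν₂ : Measure SState} [IsProbabilityMeasure ν₁]
    [IsProbabilityMeasure ν₂] (hψ : Continuous ψ) (hψ1 : ∀ u, |ψ u| ≤ 1) :
    |(∑ n ∈ Finset.range C, (Phi C d ν₁ n / (n + 1)) * ∫ x, aker ψ n x ∂(fiber ν₁ n))
      - ∑ n ∈ Finset.range C, (Phi C d ν₂ n / (n + 1)) * ∫ x, aker ψ n x ∂(fiber ν₂ n)|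
      ≤ (2 * d + 2 * d * d) * measDist ν₁ ν₂ := by
  have hΔ0 : 0 ≤ measDist ν₁ ν₂ := measDist_nonneg ν₁ ν₂
  set a₁ : ℕ → ℝ := fun n => Phi C d ν₁ n / (n + 1) with ha₁
  have ha₁b : ∀ n, |a₁ n| ≤ d / (n + 1) := fun n => abs_a_le C d ν₁ n
  -- middle term
  set M : ℝ := ∑ n ∈ Finset.range C, a₁ n * ∫ x, aker ψ n x ∂(fiber ν₂ n) with hM
  have hP : |(∫ u, arrFn C a₁ ψ u ∂ν₁) - ∫ u, arrFn C a₁ ψ u ∂ν₂|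
      ≤ (2 * d) * measDist ν₁ ν₂ :=
    pair_le_measDist (continuous_arrFn C a₁ hψ) (abs_arrFn_le C d ha₁b hψ1)
  rw [integral_arrFn C a₁ ν₁ hψ hψ1, integral_arrFn C a₁ ν₂ hψ hψ1] at hP
  have hT : |M - ∑ n ∈ Finset.range C,
      (Phi C d ν₂ n / (n + 1)) * ∫ x, aker ψ n x ∂(fiber ν₂ n)|
      ≤ (2 * d * d) * measDist ν₁ ν₂ := by
    rw [hM, ← Finset.sum_sub_distrib]
    calc |∑ n ∈ Finset.range C, (a₁ n * (∫ x, aker ψ n x ∂(fiber ν₂ n))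
            - (Phi C d ν₂ n / (n + 1)) * ∫ x, aker ψ n x ∂(fiber ν₂ n))|
        ≤ ∑ n ∈ Finset.range C, |a₁ n * (∫ x, aker ψ n x ∂(fiber ν₂ n))
            - (Phi C d ν₂ n / (n + 1)) * ∫ x, aker ψ n x ∂(fiber ν₂ n)| :=
          Finset.abs_sum_le_sum_abs _ _
      _ ≤ ∑ n ∈ Finset.range C, (2 * d * d * measDist ν₁ ν₂) * (ν₂ (level n)).toReal := by
          refine Finset.sum_le_sum fun n _ => ?_
          rw [← sub_mul, abs_mul]
          have hdiff : |a₁ n - Phi C d ν₂ n / (n + 1)|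
              ≤ (d * d * measDist ν₁ ν₂) / (n + 1) := by
            rw [ha₁]
            simp only []
            rw [div_sub_div_same, abs_div, abs_of_pos (show (0:ℝ) < (n:ℝ) + 1 by positivity)]
            gcongr
            exact abs_Phi_sub_le C d n
          calc |a₁ n - Phi C d ν₂ n / (n + 1)| * |∫ x, aker ψ n x ∂(fiber ν₂ n)|
              ≤ ((d * d * measDist ν₁ ν₂) / (n + 1))
                  * (((n+1) * 2) * (ν₂ (level n)).toReal) :=
                mul_le_mul hdiff (abs_integral_aker_le ν₂ hψ1 n) (abs_nonneg _) (by positivity)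
            _ = (2 * d * d * measDist ν₁ ν₂) * (ν₂ (level n)).toReal := by
                have h0 : ((n : ℝ) + 1) ≠ 0 := by positivity
                field_simp
      _ = (2 * d * d * measDist ν₁ ν₂) * ∑ n ∈ Finset.range C, (ν₂ (level n)).toReal :=
          (Finset.mul_sum _ _ _).symm
      _ ≤ (2 * d * d * measDist ν₁ ν₂) * 1 :=
          mul_le_mul_of_nonneg_left (sum_level_toReal_le ν₂ _) (by positivity)
      _ = 2 * d * d * measDist ν₁ ν₂ := mul_one _
  calc |(∑ n ∈ Finset.range C, (Phi C d ν₁ n / (n + 1)) * ∫ x, aker ψ n x ∂(fiber ν₁ n))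
      - ∑ n ∈ Finset.range C, (Phi C d ν₂ n / (n + 1)) * ∫ x, aker ψ n x ∂(fiber ν₂ n)|
      = |((∑ n ∈ Finset.range C, a₁ n * ∫ x, aker ψ n x ∂(fiber ν₁ n)) - M)
        + (M - ∑ n ∈ Finset.range C,
            (Phi C d ν₂ n / (n + 1)) * ∫ x, aker ψ n x ∂(fiber ν₂ n))| := by
        simp only [ha₁]
        congr 1
        ring
    _ ≤ |(∑ n ∈ Finset.range C, a₁ n * ∫ x, aker ψ n x ∂(fiber ν₁ n)) - M|
        + |M - ∑ n ∈ Finset.range C,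
            (Phi C d ν₂ n / (n + 1)) * ∫ x, aker ψ n x ∂(fiber ν₂ n)| := abs_add_le _ _
    _ ≤ (2 * d) * measDist ν₁ ν₂ + (2 * d * d) * measDist ν₁ ν₂ := add_le_add hP hT
    _ = (2 * d + 2 * d * d) * measDist ν₁ ν₂ := by ring

lemma abs_drift_sub_le (C d : ℕ) (hC : 1 ≤ C) (hd : 1 ≤ d) {lam : ℝ} (hlam : 0 < lam)
    {ν₁ ν₂ : Measure SState} [IsProbabilityMeasure ν₁] [IsProbabilityMeasure ν₂]
    (hβ : Continuous β) (hβb : ∀ x, |β x| ≤ Mβ) (hψ : Continuous ψ)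
    (hψ1 : ∀ u, |ψ u| ≤ 1) :
    |drift C d lam β ψ ν₁ - drift C d lam β ψ ν₂|
      ≤ (2 * C * Mβ + 8 * d ^ 2 * lam) * measDist ν₁ ν₂ := by
  have hΔ0 : 0 ≤ measDist ν₁ ν₂ := measDist_nonneg ν₁ ν₂
  have hMβ := Mβ_nonneg hβb
  rw [drift_eq C d hC lam ν₁ hβ hβb hψ hψ1, drift_eq C d hC lam ν₂ hβ hβb hψ hψ1]
  have hdeath : |(∫ u, deathFn C β ψ u ∂ν₁) - ∫ u, deathFn C β ψ u ∂ν₂|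
      ≤ (2 * C * Mβ) * measDist ν₁ ν₂ :=
    pair_le_measDist (continuous_deathFn C hβ hψ) (abs_deathFn_le C hβb hψ1)
  have harr := arr_sum_diff_le (ψ := ψ) C d (ν₁ := ν₁) (ν₂ := ν₂) hψ hψ1
  have hd' : (1 : ℝ) ≤ d := by exact_mod_cast hd
  calc |(∫ u, deathFn C β ψ u ∂ν₁ + lam * ∑ n ∈ Finset.range C,
        (Phi C d ν₁ n / (n + 1)) * ∫ x, aker ψ n x ∂(fiber ν₁ n))
      - (∫ u, deathFn C β ψ u ∂ν₂ + lam * ∑ n ∈ Finset.range C,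
        (Phi C d ν₂ n / (n + 1)) * ∫ x, aker ψ n x ∂(fiber ν₂ n))|
      = |((∫ u, deathFn C β ψ u ∂ν₁) - ∫ u, deathFn C β ψ u ∂ν₂)
        + lam * ((∑ n ∈ Finset.range C,
            (Phi C d ν₁ n / (n + 1)) * ∫ x, aker ψ n x ∂(fiber ν₁ n))
          - ∑ n ∈ Finset.range C,
            (Phi C d ν₂ n / (n + 1)) * ∫ x, aker ψ n x ∂(fiber ν₂ n))| := by
        congr 1
        ring
    _ ≤ |(∫ u, deathFn C β ψ u ∂ν₁) - ∫ u, deathFn C β ψ u ∂ν₂|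
        + |lam| * |(∑ n ∈ Finset.range C,
            (Phi C d ν₁ n / (n + 1)) * ∫ x, aker ψ n x ∂(fiber ν₁ n))
          - ∑ n ∈ Finset.range C,
            (Phi C d ν₂ n / (n + 1)) * ∫ x, aker ψ n x ∂(fiber ν₂ n)| := by
        rw [← abs_mul]
        exact abs_add_le _ _
    _ ≤ (2 * C * Mβ) * measDist ν₁ ν₂ + lam * ((2 * d + 2 * d * d) * measDist ν₁ ν₂) := by
        rw [abs_of_pos hlam]
        exact add_le_add hdeath (mul_le_mul_of_nonneg_left harr hlam.le)
    _ ≤ (2 * C * Mβ) * measDist ν₁ ν₂ + lam * ((8 * d ^ 2) * measDist ν₁ ν₂) := by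
        have h8 : 2 * (d:ℝ) + 2 * d * d ≤ 8 * (d:ℝ) ^ 2 := by nlinarith
        have := mul_le_mul_of_nonneg_right h8 hΔ0
        have := mul_le_mul_of_nonneg_left this hlam.le
        linarith
    _ = (2 * C * Mβ + 8 * d ^ 2 * lam) * measDist ν₁ ν₂ := by ring

end Bound
section Cont

variable {β : ℝ≥0 → ℝ} {ψ : SState → ℝ} {Mβ : ℝ} {C d : ℕ} {lam : ℝ}

lemma memM1_prob {C : ℕ} {ν : Measure SState} (h : MemM1 C ν) :
    IsProbabilityMeasure ν := h.1

lemma contPair {ν : ℝ → Measure SState} (hw : WeaklyContinuous ν)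
    (f : BoundedContinuousFunction SState ℝ) :
    Continuous fun s => ∫ u, f u ∂(ν (max s 0)) :=
  (hw f).comp_continuous (continuous_id.max continuous_const)
    (fun x => le_max_right x 0)

/-- Bundle a bounded continuous function. -/
def mkBCF (f : SState → ℝ) (hc : Continuous f) (M : ℝ) (hb : ∀ u, |f u| ≤ M) :
    BoundedContinuousFunction SState ℝ :=
  BoundedContinuousFunction.ofNormedAddCommGroup f hc M
    (fun u => by simpa [Real.norm_eq_abs] using hb u)

lemma cont_Rbar_s {ν : ℝ → Measure SState} (hmem : ∀ t ≥ (0:ℝ), MemM1 C (ν t))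
    (hw : WeaklyContinuous ν) (n : ℕ) :
    Continuous fun s => Rbar C (ν (max s 0)) n := by
  have hfun : (fun s => Rbar C (ν (max s 0)) n)
      = fun s => ∫ u, mkBCF (chi (Finset.Icc n C)) (continuous_chi _) 1 (abs_chi_le _) u
          ∂(ν (max s 0)) := by
    funext s
    haveI : IsProbabilityMeasure (ν (max s 0)) := memM1_prob (hmem _ (le_max_right s 0))
    exact Rbar_eq_integral C (ν (max s 0)) n
  rw [hfun]
  exact contPair hw _

lemma cont_drift_s {ν : ℝ → Measure SState} (hC : 1 ≤ C) (hmem : ∀ t ≥ (0:ℝ), MemM1 C (ν t))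
    (hw : WeaklyContinuous ν) (hβ : Continuous β) (hβb : ∀ x, |β x| ≤ Mβ)
    (hψ : Continuous ψ) (hψ1 : ∀ u, |ψ u| ≤ 1) :
    Continuous fun s => drift C d lam β ψ (ν (max s 0)) := by
  have hMβ := Mβ_nonneg hβb
  have hfun : (fun s => drift C d lam β ψ (ν (max s 0)))
      = fun s => (∫ u, mkBCF (deathFn C β ψ) (continuous_deathFn C hβ hψ) (2*C*Mβ)
            (abs_deathFn_le C hβb hψ1) u ∂(ν (max s 0)))
          + lam * ∑ n ∈ Finset.range C, (Phi C d (ν (max s 0)) n / (n + 1))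
              * ∫ u, mkBCF (extend n (aker ψ n)) (continuous_extend (continuous_aker hψ n))
                  ((n+1)*2) (abs_extend_le (by positivity) (abs_aker_le hψ1 n)) u
                  ∂(ν (max s 0)) := by
    funext s
    haveI : IsProbabilityMeasure (ν (max s 0)) := memM1_prob (hmem _ (le_max_right s 0))
    rw [drift_eq C d hC lam (ν (max s 0)) hβ hβb hψ hψ1]
    congr 1
    congr 1
    refine Finset.sum_congr rfl fun n _ => ?_
    congr 1
    exact (integral_extend (continuous_aker hψ n) _).symm
  rw [hfun]
  apply Continuous.add
  · exact contPair hw _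
  apply continuous_const.mul
  apply continuous_finset_sum
  intro n _
  apply Continuous.mul
  · apply Continuous.div_const
    have : (fun s => Phi C d (ν (max s 0)) n)
        = fun s => ∑ k ∈ Finset.range d,
            (Rbar C (ν (max s 0)) n) ^ k * (Rbar C (ν (max s 0)) (n+1)) ^ (d-1-k) := by
      funext s; rw [Phi]
    rw [this]
    apply continuous_finset_sum
    intro k _
    exact ((cont_Rbar_s hmem hw n).pow k).mul ((cont_Rbar_s hmem hw (n+1)).pow _)
  · exact contPair hw _

lemma cont_shift_param (hψ : Continuous ψ) (u : SState) :
    Continuous fun y : ℝ => ψ (shift y u) := by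
  have : (fun y : ℝ => ψ (shift y u))
      = fun y => ψ ⟨u.1, fun i => u.2 i + Real.toNNReal y⟩ := rfl
  rw [this]
  exact hψ.comp (continuous_sigmaMk.comp
    (continuous_pi fun i => continuous_const.add continuous_real_toNNReal))

lemma continuous_shift (y : ℝ) : Continuous (shift y) := by
  apply continuous_sigma
  intro n
  have : (fun x : Fin n → ℝ≥0 => shift y ⟨n, x⟩)
      = fun x => (⟨n, fun i => x i + Real.toNNReal y⟩ : SState) := rfl
  rw [this]
  exact continuous_sigmaMk.comp (continuous_pi fun i =>
    (continuous_apply i).add continuous_const)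

lemma cont_y_integral {n : ℕ} (μF : Measure (Fin n → ℝ≥0)) [IsFiniteMeasure μF]
    {G : ℝ → (Fin n → ℝ≥0) → ℝ} (hGc : ∀ y, Continuous (G y)) (M : ℝ)
    (hGb : ∀ y x, |G y x| ≤ M) (hGy : ∀ x, Continuous fun y => G y x) :
    Continuous fun y => ∫ x, G y x ∂μF :=
  continuous_of_dominated (fun y => (hGc y).aestronglyMeasurable)
    (fun y => Filter.Eventually.of_forall fun x => by
      simpa [Real.norm_eq_abs] using hGb y x)
    (integrable_const M) (Filter.Eventually.of_forall hGy)

lemma cont_drift_y (μ : Measure SState) [IsProbabilityMeasure μ]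
    (hβ : Continuous β) (hβb : ∀ x, |β x| ≤ Mβ)
    (φ : SState → ℝ) (hφc : Continuous φ) (hφ1 : ∀ u, |φ u| ≤ 1) :
    Continuous fun y => drift C d lam β (fun u => φ (shift y u)) μ := by
  have hψc : ∀ y : ℝ, Continuous fun u => φ (shift y u) :=
    fun y => hφc.comp (continuous_shift y)
  have hψ1 : ∀ y : ℝ, ∀ u, |φ (shift y u)| ≤ 1 := fun y u => hφ1 _
  simp only [drift]
  apply Continuous.add
  · apply continuous_finset_sum
    intro n _
    apply continuous_finset_sum
    intro j _
    haveI := isFiniteMeasure_fiber μ (n+1)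
    exact cont_y_integral (fiber μ (n+1))
      (fun y => continuous_dterm hβ (hψc y) n j) (Mβ * 2)
      (fun y x => abs_dterm_le hβb (hψ1 y) n j x)
      (fun x => (continuous_const.mul
        ((cont_shift_param hφc _).sub (cont_shift_param hφc _))))
  · apply continuous_const.mul
    apply Continuous.add
    · exact (continuous_const.mul
        ((cont_shift_param hφc oneZero).sub (cont_shift_param hφc emptyState)))
    · apply continuous_finset_sum
      intro n _
      apply continuous_const.mul
      apply continuous_finset_sum
      intro j _
      haveI := isFiniteMeasure_fiber μ n
      exact cont_y_integral (fiber μ n)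
        (fun y => continuous_aterm (hψc y) n j) 2
        (fun y x => abs_aterm_le (hψ1 y) n j x)
        (fun x => ((cont_shift_param hφc _).sub (cont_shift_param hφc _)))

set_option maxHeartbeats 400000 in
lemma stronglyMeasurable_driftdiag {ν : ℝ → Measure SState} (hC : 1 ≤ C)
    (hmem : ∀ t ≥ (0:ℝ), MemM1 C (ν t)) (hw : WeaklyContinuous ν)
    (hβ : Continuous β) (hβb : ∀ x, |β x| ≤ Mβ)
    (φ : SState → ℝ) (hφc : Continuous φ) (hφ1 : ∀ u, |φ u| ≤ 1) (t : ℝ) :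
    StronglyMeasurable fun s =>
      drift C d lam β (fun u => φ (shift (t - s) u)) (ν (max s 0)) := by
  have hu_cont : ∀ s, Continuous fun y =>
      drift C d lam β (fun u => φ (shift y u)) (ν (max s 0)) := by
    intro s
    haveI : IsProbabilityMeasure (ν (max s 0)) := memM1_prob (hmem _ (le_max_right s 0))
    exact cont_drift_y (ν (max s 0)) hβ hβb φ hφc hφ1
  have h : ∀ y, StronglyMeasurable fun s =>
      drift C d lam β (fun u => φ (shift y u)) (ν (max s 0)) := by
    intro y
    exact (cont_drift_s hC hmem hw hβ hβb (hφc.comp (continuous_shift y))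
      (fun u => hφ1 _)).stronglyMeasurable
  have hSM := stronglyMeasurable_uncurry_of_continuous_of_stronglyMeasurable
    (u := fun y s => drift C d lam β (fun u => φ (shift y u)) (ν (max s 0))) hu_cont h
  have hmeas : Measurable fun s : ℝ => ((t - s, s) : ℝ × ℝ) :=
    (measurable_const.sub measurable_id).prodMk measurable_id
  have hcomp := hSM.comp_measurable hmeas
  exact hcomp

lemma measurable_deltamax {ν₁ ν₂ : ℝ → Measure SState}
    (hmem₁ : ∀ t ≥ (0:ℝ), MemM1 C (ν₁ t)) (hmem₂ : ∀ t ≥ (0:ℝ), MemM1 C (ν₂ t))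
    (hw₁ : WeaklyContinuous ν₁) (hw₂ : WeaklyContinuous ν₂) :
    Measurable fun s => measDist (ν₁ (max s 0)) (ν₂ (max s 0)) := by
  apply LowerSemicontinuous.measurable
  intro x y hy
  haveI : ∀ s : ℝ, IsProbabilityMeasure (ν₁ (max s 0)) :=
    fun s => memM1_prob (hmem₁ _ (le_max_right s 0))
  haveI : ∀ s : ℝ, IsProbabilityMeasure (ν₂ (max s 0)) :=
    fun s => memM1_prob (hmem₂ _ (le_max_right s 0))
  haveI : Nonempty {φ : BoundedContinuousFunction SState ℝ // ‖φ‖ ≤ 1} := ⟨⟨0, by simp⟩⟩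
  have hy' : y < ⨆ φ : {φ : BoundedContinuousFunction SState ℝ // ‖φ‖ ≤ 1},
      |(∫ u, φ.1 u ∂(ν₁ (max x 0))) - ∫ u, φ.1 u ∂(ν₂ (max x 0))| := hy
  obtain ⟨φ, hφ⟩ := exists_lt_of_lt_ciSup hy'
  have hc : Continuous fun s =>
      |(∫ u, φ.1 u ∂(ν₁ (max s 0))) - ∫ u, φ.1 u ∂(ν₂ (max s 0))| :=
    ((contPair hw₁ φ.1).sub (contPair hw₂ φ.1)).abs
  have hev := hc.continuousAt (x := x) |>.preimage_mem_nhds (Ioi_mem_nhds hφ)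
  filter_upwards [hev] with s hs
  calc y < |(∫ u, φ.1 u ∂(ν₁ (max s 0))) - ∫ u, φ.1 u ∂(ν₂ (max s 0))| := hs
    _ ≤ measDist (ν₁ (max s 0)) (ν₂ (max s 0)) :=
        le_ciSup (bddAbove_measDist _ _) φ

end Cont

set_option maxHeartbeats 1000000 in
/-- **Grönwall-type integral inequality for two mild solutions.**
If `(ν¹_t)` and `(ν²_t)` are two weakly continuous paths of probability measures on `𝒰`
each satisfying the mild-form mean-field equation, then for every `t ≥ 0`,
`‖ν¹_t − ν²_t‖ ≤ ‖ν¹_0 − ν²_0‖ + (2C‖β‖_∞ + 8d²λ) ∫_0^t ‖ν¹_s − ν²_s‖ ds`,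
where `‖·‖` is the dual bounded-continuous norm `measDist`. -/
theorem mild_solutions_gronwall_ineq
    (C d : ℕ) (hC : 1 ≤ C) (hd : 1 ≤ d) (lam : ℝ) (hlam : 0 < lam)
    (β : BoundedContinuousFunction ℝ≥0 ℝ) (hβnn : ∀ x, 0 ≤ β x)
    (ν₁ ν₂ : ℝ → Measure SState)
    (h₁ : IsMildSolution C d lam (fun x => β x) ν₁)
    (h₂ : IsMildSolution C d lam (fun x => β x) ν₂) :
    ∀ t ≥ (0 : ℝ),
      measDist (ν₁ t) (ν₂ t) ≤
        measDist (ν₁ 0) (ν₂ 0) +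
          (2 * (C : ℝ) * ‖β‖ + 8 * (d : ℝ) ^ 2 * lam) *
            ∫ s in (0 : ℝ)..t, measDist (ν₁ s) (ν₂ s) := by
  obtain ⟨hmem₁, hw₁, hmild₁⟩ := h₁
  obtain ⟨hmem₂, hw₂, hmild₂⟩ := h₂
  intro t ht
  have hβc : Continuous (fun x : ℝ≥0 => β x) := β.continuous
  have hβb : ∀ x, |(fun x : ℝ≥0 => β x) x| ≤ ‖β‖ := fun x => by
    simpa [Real.norm_eq_abs] using β.norm_coe_le_norm x
  haveI hprob₁ : ∀ s : ℝ, IsProbabilityMeasure (ν₁ (max s 0)) :=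
    fun s => memM1_prob (hmem₁ _ (le_max_right s 0))
  haveI hprob₂ : ∀ s : ℝ, IsProbabilityMeasure (ν₂ (max s 0)) :=
    fun s => memM1_prob (hmem₂ _ (le_max_right s 0))
  haveI : IsProbabilityMeasure (ν₁ t) := memM1_prob (hmem₁ t ht)
  haveI : IsProbabilityMeasure (ν₂ t) := memM1_prob (hmem₂ t ht)
  haveI : IsProbabilityMeasure (ν₁ 0) := memM1_prob (hmem₁ 0 le_rfl)
  haveI : IsProbabilityMeasure (ν₂ 0) := memM1_prob (hmem₂ 0 le_rfl)
  haveI : Nonempty {φ : BoundedContinuousFunction SState ℝ // ‖φ‖ ≤ 1} := ⟨⟨0, by simp⟩⟩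
  set K : ℝ := 2 * (C : ℝ) * ‖β‖ + 8 * (d : ℝ) ^ 2 * lam with hK
  have hK0 : 0 ≤ K := by positivity
  set δ : ℝ → ℝ := fun s => measDist (ν₁ (max s 0)) (ν₂ (max s 0)) with hδ
  -- integrability of `δ`
  have hδmeas : Measurable δ := measurable_deltamax hmem₁ hmem₂ hw₁ hw₂
  have hδbd : ∀ s, ‖δ s‖ ≤ ‖(2:ℝ)‖ := fun s => by
    rw [Real.norm_eq_abs, Real.norm_eq_abs,
      abs_of_nonneg (measDist_nonneg (ν₁ (max s 0)) (ν₂ (max s 0))), abs_of_nonneg two_pos.le]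
    exact measDist_le_two _ _
  have hδint : IntervalIntegrable δ volume 0 t :=
    intervalIntegrable_const.mono_fun hδmeas.aestronglyMeasurable.restrict
      (Filter.Eventually.of_forall hδbd)
  have hKδint : IntervalIntegrable (fun s => K * δ s) volume 0 t := by
    simpa [mul_comm] using hδint.const_mul K
  have hδeq : ∫ s in (0:ℝ)..t, δ s = ∫ s in (0:ℝ)..t, measDist (ν₁ s) (ν₂ s) := by
    refine intervalIntegral.integral_congr fun s hs => ?_
    rw [Set.uIcc_of_le ht] at hs
    rw [hδ]
    simp only
    rw [max_eq_left hs.1]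
  refine ciSup_le fun φ0 => ?_
  obtain ⟨φ, hφ1⟩ := φ0
  have hφb : ∀ u, |φ u| ≤ 1 := fun u =>
    le_trans (by simpa [Real.norm_eq_abs] using φ.norm_coe_le_norm u) hφ1
  show |(∫ u, φ u ∂(ν₁ t)) - ∫ u, φ u ∂(ν₂ t)| ≤ _
  have hcb : IsCb ⇑φ := ⟨φ.continuous, 1, hφb⟩
  have hm₁ := hmild₁ φ hcb t ht
  have hm₂ := hmild₂ φ hcb t ht
  simp only [pair] at hm₁ hm₂
  set D₁ : ℝ → ℝ := fun s =>
    drift C d lam (fun x => β x) (fun u => φ (shift (t - s) u)) (ν₁ (max s 0)) with hD₁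
  set D₂ : ℝ → ℝ := fun s =>
    drift C d lam (fun x => β x) (fun u => φ (shift (t - s) u)) (ν₂ (max s 0)) with hD₂
  have hcongr₁ : ∫ s in (0:ℝ)..t,
      drift C d lam (fun x => β x) (fun u => φ (shift (t - s) u)) (ν₁ s)
      = ∫ s in (0:ℝ)..t, D₁ s := by
    refine intervalIntegral.integral_congr fun s hs => ?_
    rw [Set.uIcc_of_le ht] at hs
    rw [hD₁]
    simp only
    rw [max_eq_left hs.1]
  have hcongr₂ : ∫ s in (0:ℝ)..t,
      drift C d lam (fun x => β x) (fun u => φ (shift (t - s) u)) (ν₂ s)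
      = ∫ s in (0:ℝ)..t, D₂ s := by
    refine intervalIntegral.integral_congr fun s hs => ?_
    rw [Set.uIcc_of_le ht] at hs
    rw [hD₂]
    simp only
    rw [max_eq_left hs.1]
  rw [hcongr₁] at hm₁
  rw [hcongr₂] at hm₂
  -- integrability of the drifts
  have hD₁sm : StronglyMeasurable D₁ :=
    stronglyMeasurable_driftdiag hC hmem₁ hw₁ hβc hβb ⇑φ φ.continuous hφb t
  have hD₂sm : StronglyMeasurable D₂ :=
    stronglyMeasurable_driftdiag hC hmem₂ hw₂ hβc hβb ⇑φ φ.continuous hφb t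
  have hDbd : ∀ (νx : ℝ → Measure SState), (∀ u ≥ (0:ℝ), MemM1 C (νx u)) → ∀ s : ℝ,
      ‖drift C d lam (fun x => β x) (fun u => φ (shift (t - s) u)) (νx (max s 0))‖
        ≤ ‖(2 * (C:ℝ) * ‖β‖ + 2 * (d:ℝ) * lam : ℝ)‖ := by
    intro νx hmx s
    haveI : IsProbabilityMeasure (νx (max s 0)) := memM1_prob (hmx _ (le_max_right s 0))
    rw [Real.norm_eq_abs, Real.norm_eq_abs,
      abs_of_nonneg (show (0:ℝ) ≤ 2 * (C:ℝ) * ‖β‖ + 2 * (d:ℝ) * lam by positivity)]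
    exact abs_drift_le (ψ := fun u => φ (shift (t - s) u)) C d hC hlam (νx (max s 0)) hβc hβb
      (φ.continuous.comp (continuous_shift (t - s))) (fun u => hφb _)
  have hD₁int : IntervalIntegrable D₁ volume 0 t :=
    intervalIntegrable_const.mono_fun hD₁sm.aestronglyMeasurable.restrict
      (Filter.Eventually.of_forall (hDbd ν₁ hmem₁))
  have hD₂int : IntervalIntegrable D₂ volume 0 t :=
    intervalIntegrable_const.mono_fun hD₂sm.aestronglyMeasurable.restrict
      (Filter.Eventually.of_forall (hDbd ν₂ hmem₂))
  -- pointwise difference bound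
  have hptw : ∀ s ∈ Set.Icc (0:ℝ) t, |D₁ s - D₂ s| ≤ K * δ s := by
    intro s _
    exact abs_drift_sub_le (ψ := fun u => φ (shift (t - s) u)) C d hC hd hlam hβc hβb
      (φ.continuous.comp (continuous_shift (t - s))) (fun u => hφb _)
  have hptw' : ∀ s ∈ Set.Icc (0:ℝ) t, |D₁ s - D₂ s| ≤ K * δ s := hptw
  -- initial-distance bound
  have hA : |(∫ u, φ (shift t u) ∂(ν₁ 0)) - ∫ u, φ (shift t u) ∂(ν₂ 0)|
      ≤ measDist (ν₁ 0) (ν₂ 0) := by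
    have := pair_le_measDist (μ₁ := ν₁ 0) (μ₂ := ν₂ 0)
      (φ.continuous.comp (continuous_shift t)) (M := 1) (fun u => hφb _)
    simpa using this
  -- assemble
  have hsub : (∫ s in (0:ℝ)..t, D₁ s) - ∫ s in (0:ℝ)..t, D₂ s
      = ∫ s in (0:ℝ)..t, (D₁ s - D₂ s) := (intervalIntegral.integral_sub hD₁int hD₂int).symm
  have habs : |∫ s in (0:ℝ)..t, (D₁ s - D₂ s)| ≤ ∫ s in (0:ℝ)..t, |D₁ s - D₂ s| :=
    intervalIntegral.abs_integral_le_integral_abs ht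
  have hmono : ∫ s in (0:ℝ)..t, |D₁ s - D₂ s| ≤ ∫ s in (0:ℝ)..t, K * δ s :=
    intervalIntegral.integral_mono_on ht ((hD₁int.sub hD₂int).abs) hKδint hptw'
  have hKδ : ∫ s in (0:ℝ)..t, K * δ s = K * ∫ s in (0:ℝ)..t, δ s :=
    intervalIntegral.integral_const_mul K δ
  calc |(∫ u, φ u ∂(ν₁ t)) - ∫ u, φ u ∂(ν₂ t)|
      = |((∫ u, φ (shift t u) ∂(ν₁ 0)) - ∫ u, φ (shift t u) ∂(ν₂ 0))
        + ((∫ s in (0:ℝ)..t, D₁ s) - ∫ s in (0:ℝ)..t, D₂ s)| := by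
        rw [hm₁, hm₂]
        congr 1
        ring
    _ ≤ |(∫ u, φ (shift t u) ∂(ν₁ 0)) - ∫ u, φ (shift t u) ∂(ν₂ 0)|
        + |(∫ s in (0:ℝ)..t, D₁ s) - ∫ s in (0:ℝ)..t, D₂ s| := abs_add_le _ _
    _ ≤ measDist (ν₁ 0) (ν₂ 0) + ∫ s in (0:ℝ)..t, |D₁ s - D₂ s| := by
        refine add_le_add hA ?_
        rw [hsub]
        exact habs
    _ ≤ measDist (ν₁ 0) (ν₂ 0) + K * ∫ s in (0:ℝ)..t, measDist (ν₁ s) (ν₂ s) := by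
        have := hmono.trans (le_of_eq hKδ)
        rw [hδeq] at this
        linarith

end MFModel
end
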